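/- arXiv:1111.3991 — 4 statements merged into one kernel-verified Lean document; each statement's English description precedes it below -/
import Mathlib

section
/- For every finite connected graph G=(V,E) with positive weights W, every u∈ℋ₀ and every i₀∈V, the integrand of the limiting measure is dominated by a Gaussian: e^{u_{i₀}} e^{-H(W,u)} √(D(W,u)) ≤ (Σ_{i∈V} (e^{N u_i} + e^{−N u_i})) · exp(−(1/2) Σ_{{i,j}∈E} W_{ij}(u_i−u_j)²) · √(D(W,0)). -/
open MeasureTheory Real Filter

noncomputable section

variable {V : Type*} [Fintype V] [DecidableEq V]

/-- `H(W,u) = 2 Σ_{{i,j} ∈ E} W_{ij} sinh²((uᵢ-uⱼ)/2)`, written as a double sum over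
ordered pairs (each edge counted twice; `W i j = 0` off edges). -/
def Hfun (W : V → V → ℝ) (u : V → ℝ) : ℝ :=
  ∑ i, ∑ j, W i j * Real.sinh ((u i - u j) / 2) ^ 2

/-- The weighted graph Laplacian of the conductances `W_{ij} e^{uᵢ+uⱼ}`. -/
def lapl (W : V → V → ℝ) (u : V → ℝ) : Matrix V V ℝ :=
  Matrix.of fun i j =>
    if i = j then ∑ k, W i k * Real.exp (u i + u k)
    else -(W i j * Real.exp (u i + u j))

/-- `D(W,u)`: the diagonal minor at `j₀` of the weighted Laplacian of the conductances
`W_{ij} e^{uᵢ+uⱼ}`; by the matrix-tree theorem it equals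
`Σ_{spanning trees T} ∏_{{i,j} ∈ T} W_{ij} e^{uᵢ+uⱼ}` (and does not depend on `j₀`). -/
def Dfun (j₀ : V) (W : V → V → ℝ) (u : V → ℝ) : ℝ :=
  ((lapl W u).submatrix (fun i : {i : V // i ≠ j₀} => (i : V))
    (fun i : {i : V // i ≠ j₀} => (i : V))).det

namespace GaussDom

open Matrix

section DetLemmas

variable {n : Type*} [Fintype n] [DecidableEq n]

lemma psd_det_nonneg {A : Matrix n n ℝ} (hA : A.PosSemidef) : 0 ≤ A.det := by
  rw [hA.1.det_eq_prod_eigenvalues]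
  exact Finset.prod_nonneg fun i _ => by exact_mod_cast hA.eigenvalues_nonneg i

lemma one_le_det_one_add {C : Matrix n n ℝ} (hC : C.PosSemidef) :
    1 ≤ (1 + C).det := by
  have hM : (1 + C).PosSemidef := Matrix.PosSemidef.add Matrix.PosSemidef.one hC
  rw [hM.1.det_eq_prod_eigenvalues]
  calc (1:ℝ) = ∏ _i : n, 1 := by simp
    _ ≤ _ := Finset.prod_le_prod (fun i _ => zero_le_one) (fun i _ => ?_)
  set v := hM.1.eigenvectorBasis i with hv
  have hnorm : ‖v‖ = 1 := hM.1.eigenvectorBasis.orthonormal.1 i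
  have hdot : dotProduct (⇑v) (⇑v) = 1 := by
    have h1 : (inner ℝ v v : ℝ) = dotProduct (⇑v) (star (⇑v)) :=
      EuclideanSpace.inner_eq_star_dotProduct v v
    have h2 : (inner ℝ v v : ℝ) = ‖v‖ ^ 2 := real_inner_self_eq_norm_sq v
    rw [star_trivial] at h1
    rw [← h1, h2, hnorm, one_pow]
  have hmv : (1 + C) *ᵥ ⇑v = hM.1.eigenvalues i • ⇑v := hM.1.mulVec_eigenvectorBasis i
  have hc : 0 ≤ dotProduct (⇑v) (C *ᵥ ⇑v) := by
    have := hC.dotProduct_mulVec_nonneg (⇑v); rwa [star_trivial] at this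
  have hexp : dotProduct (⇑v) ((1 + C) *ᵥ ⇑v)
      = 1 + dotProduct (⇑v) (C *ᵥ ⇑v) := by
    rw [Matrix.add_mulVec, Matrix.one_mulVec, dotProduct_add, hdot]
  have : dotProduct (⇑v) ((1 + C) *ᵥ ⇑v) = hM.1.eigenvalues i := by
    rw [hmv, dotProduct_smul, smul_eq_mul, hdot, mul_one]
  rw [hexp] at this
  have h1 : 1 ≤ hM.1.eigenvalues i := by rw [← this]; linarith [hc]
  exact_mod_cast h1

lemma det_le_det_add {A B : Matrix n n ℝ} (hA : A.PosSemidef) (hB : B.PosSemidef) :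
    A.det ≤ (A + B).det := by
  by_cases h : A.det = 0
  · rw [h]; exact psd_det_nonneg (hA.add hB)
  · set S := (open scoped MatrixOrder in CFC.sqrt A) with hSdef
    have hS : S.PosSemidef := (open scoped MatrixOrder in (CFC.sqrt_nonneg A).posSemidef)
    have hSS : S * S = A := (open scoped MatrixOrder in CFC.sqrt_mul_sqrt_self A hA.nonneg)
    have hdS : S.det ≠ 0 := fun h0 => h (by rw [← hSS, Matrix.det_mul, h0, mul_zero])
    have hu : IsUnit S.det := isUnit_iff_ne_zero.mpr hdS
    have hSi : S * S⁻¹ = 1 := Matrix.mul_nonsing_inv _ hu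
    have hSi' : S⁻¹ * S = 1 := Matrix.nonsing_inv_mul _ hu
    have hSih : (S⁻¹)ᴴ = S⁻¹ := by
      rw [Matrix.conjTranspose_nonsing_inv, hS.1.eq]
    have hC : (S⁻¹ * B * S⁻¹).PosSemidef := by
      have := hB.conjTranspose_mul_mul_same (B := S⁻¹)
      rwa [hSih] at this
    have key : A + B = S * (1 + S⁻¹ * B * S⁻¹) * S := by
      rw [Matrix.mul_add, Matrix.add_mul, mul_one, hSS]
      congr 1
      have : S * (S⁻¹ * B * S⁻¹) * S = (S * S⁻¹) * B * (S⁻¹ * S) := by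
        simp only [Matrix.mul_assoc]
      rw [this, hSi, hSi', one_mul, mul_one]
    have hdA : 0 ≤ A.det := psd_det_nonneg hA
    have h1 : 1 ≤ (1 + S⁻¹ * B * S⁻¹).det := one_le_det_one_add hC
    calc A.det = A.det * 1 := (mul_one _).symm
      _ ≤ A.det * (1 + S⁻¹ * B * S⁻¹).det := by gcongr
      _ = (A + B).det := by
          rw [key, Matrix.det_mul, Matrix.det_mul, ← hSS, Matrix.det_mul]; ring

end DetLemmas

/-- generalized graph Laplacian of a conductance matrix -/
def glap (c : V → V → ℝ) : Matrix V V ℝ :=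
  Matrix.of fun i j => if i = j then ∑ k, c i k else -(c i j)

lemma glap_mulVec (c : V → V → ℝ) (x : V → ℝ) (i : V) :
    (Matrix.mulVec (glap c) x) i = (∑ k, c i k + c i i) * x i - ∑ j, c i j * x j := by
  simp only [Matrix.mulVec, dotProduct, glap, Matrix.of_apply]
  have : ∀ j, (if i = j then ∑ k, c i k else -(c i j)) * x j
      = (if i = j then (∑ k, c i k + c i i) * x j else 0) + (-(c i j * x j)) := by
    intro j
    by_cases h : i = j
    · subst h; simp; ring
    · simp [h]
  rw [Finset.sum_congr rfl fun j _ => this j, Finset.sum_add_distrib,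
    Finset.sum_ite_eq, if_pos (Finset.mem_univ i), Finset.sum_neg_distrib]
  ring

lemma glap_posSemidef (c : V → V → ℝ) (hsym : ∀ i j, c i j = c j i)
    (hnn : ∀ i j, 0 ≤ c i j) : (glap c).PosSemidef := by
  refine Matrix.posSemidef_iff_dotProduct_mulVec.mpr ⟨?_, ?_⟩
  · rw [Matrix.IsHermitian]
    ext i j
    simp only [Matrix.conjTranspose_apply, glap, Matrix.of_apply, star_trivial]
    by_cases h : i = j
    · subst h; simp
    · rw [if_neg (fun hh => h hh.symm), if_neg h, hsym]
  · intro x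
    rw [star_trivial]
    have hform : dotProduct x (Matrix.mulVec (glap c) x)
        = ∑ i, ((∑ k, c i k + c i i) * x i ^ 2 - ∑ j, c i j * (x i * x j)) := by
      simp only [dotProduct, glap_mulVec]
      refine Finset.sum_congr rfl fun i _ => ?_
      rw [mul_sub, Finset.mul_sum]
      have : ∑ j, x i * (c i j * x j) = ∑ j, c i j * (x i * x j) :=
        Finset.sum_congr rfl fun j _ => by ring
      rw [this]
      ring
    rw [hform]
    have key : ∑ i, ∑ j, c i j * (x i * x j) ≤ ∑ i, ∑ j, c i j * x i ^ 2 := by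
      have h2 : 2 * (∑ i, ∑ j, c i j * (x i * x j))
          ≤ ∑ i, ∑ j, (c i j * x i ^ 2 + c i j * x j ^ 2) := by
        rw [Finset.mul_sum]
        refine Finset.sum_le_sum fun i _ => ?_
        rw [Finset.mul_sum]
        refine Finset.sum_le_sum fun j _ => ?_
        nlinarith [hnn i j, sq_nonneg (x i - x j)]
      have hsplit : ∑ i, ∑ j, (c i j * x i ^ 2 + c i j * x j ^ 2)
          = ∑ i, ∑ j, c i j * x i ^ 2 + ∑ i, ∑ j, c i j * x j ^ 2 := by
        rw [← Finset.sum_add_distrib]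
        exact Finset.sum_congr rfl fun i _ => by rw [← Finset.sum_add_distrib]
      have hswap : ∑ i, ∑ j, c i j * x j ^ 2 = ∑ i, ∑ j, c i j * x i ^ 2 := by
        rw [Finset.sum_comm]
        exact Finset.sum_congr rfl fun j _ => Finset.sum_congr rfl fun i _ => by rw [hsym]
      linarith
    have hpos : ∑ i, c i i * x i ^ 2 ≥ 0 :=
      Finset.sum_nonneg fun i _ => mul_nonneg (hnn i i) (sq_nonneg _)
    have hexpand : ∑ i, ((∑ k, c i k + c i i) * x i ^ 2 - ∑ j, c i j * (x i * x j))
        = (∑ i, ∑ k, c i k * x i ^ 2) + (∑ i, c i i * x i ^ 2)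
          - ∑ i, ∑ j, c i j * (x i * x j) := by
      rw [← Finset.sum_add_distrib, ← Finset.sum_sub_distrib]
      refine Finset.sum_congr rfl fun i _ => ?_
      rw [add_mul, Finset.sum_mul]
    rw [hexpand]
    linarith

lemma sq_le_sinh_sq (y : ℝ) : y ^ 2 ≤ Real.sinh y ^ 2 := by
  have h : |y| ≤ |Real.sinh y| := by
    rw [Real.abs_sinh]
    rcases eq_or_lt_of_le (abs_nonneg y) with h0 | h0
    · rw [← h0]; simp
    · exact (Real.self_lt_sinh_iff.mpr h0).le
  calc y ^ 2 = |y| ^ 2 := (sq_abs y).symm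
    _ ≤ |Real.sinh y| ^ 2 := by gcongr
    _ = Real.sinh y ^ 2 := sq_abs _

end GaussDom

/-- Theorem (Gaussian domination of the integrand of the limiting measure): for `u ∈ ℋ₀`,
`e^{u_{i₀}} e^{-H(W,u)} √(D(W,u)) ≤ (Σᵢ (e^{Nuᵢ} + e^{-Nuᵢ}))
  exp(-(1/2) Σ_{{i,j}∈E} W_{ij}(uᵢ-uⱼ)²) √(D(W,0))`. -/
theorem integrand_gaussian_domination (G : SimpleGraph V) (hconn : G.Connected)
    (W : V → V → ℝ) (hWsymm : ∀ i j, W i j = W j i)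
    (hWpos : ∀ i j, G.Adj i j → 0 < W i j)
    (hWzero : ∀ i j, ¬ G.Adj i j → W i j = 0)
    (u : V → ℝ) (hu : ∑ i, u i = 0) (i₀ j₀ : V) :
    Real.exp (u i₀) * Real.exp (-Hfun W u) * Real.sqrt (Dfun j₀ W u) ≤
      (∑ i, (Real.exp ((Fintype.card V : ℝ) * u i) +
        Real.exp (-((Fintype.card V : ℝ) * u i)))) *
        Real.exp (-((1 / 4) * ∑ i, ∑ j, W i j * (u i - u j) ^ 2)) *
        Real.sqrt (Dfun j₀ W (fun _ => 0)) := by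
  classical
  have hWnn : ∀ i j, 0 ≤ W i j := fun i j => by
    by_cases h : G.Adj i j
    · exact (hWpos i j h).le
    · rw [hWzero i j h]
  have hne : (Finset.univ : Finset V).Nonempty := ⟨i₀, Finset.mem_univ i₀⟩
  set m := Finset.univ.sup' hne u with hm
  have hm_ge : ∀ i, u i ≤ m := fun i => Finset.le_sup' u (Finset.mem_univ i)
  obtain ⟨i₁, -, hi₁⟩ := Finset.exists_mem_eq_sup' hne u
  set N : ℕ := Fintype.card V with hN
  have hN1 : 1 ≤ N := Fintype.card_pos_iff.mpr ⟨i₀⟩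
  set k : ℕ := Fintype.card {i : V // i ≠ j₀} with hk
  have hkN : k + 1 = N := by
    have h1 : k = Fintype.card V - Fintype.card {i : V // i = j₀} :=
      Fintype.card_subtype_compl _
    rw [Fintype.card_subtype_eq] at h1
    omega
  have hkR : (k : ℝ) + 1 = (N : ℝ) := by exact_mod_cast congrArg (Nat.cast (R := ℝ)) hkN
  -- positive semidefiniteness of the Laplacians
  have hlapl_eq : ∀ v : V → ℝ,
      lapl W v = GaussDom.glap (fun i j => W i j * Real.exp (v i + v j)) := fun v => rfl
  have hpsd : ∀ v : V → ℝ, (lapl W v).PosSemidef := fun v => by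
    rw [hlapl_eq v]
    exact GaussDom.glap_posSemidef _
      (fun i j => by rw [hWsymm i j, add_comm])
      (fun i j => mul_nonneg (hWnn i j) (Real.exp_pos _).le)
  have hdiff : Real.exp (2 * m) • lapl W (fun _ => 0) - lapl W u
      = GaussDom.glap (fun i j => W i j * (Real.exp (2 * m) - Real.exp (u i + u j))) := by
    ext i j
    simp only [Matrix.sub_apply, Matrix.smul_apply, lapl, GaussDom.glap, Matrix.of_apply,
      smul_eq_mul]
    by_cases h : i = j
    · subst h
      simp only [if_pos rfl, if_true, eq_self_iff_true]
      rw [Finset.mul_sum, ← Finset.sum_sub_distrib]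
      refine Finset.sum_congr rfl fun l _ => ?_
      rw [add_zero, Real.exp_zero]
      ring
    · simp only [if_neg h]
      rw [add_zero, Real.exp_zero]
      ring
  have hpsd_diff : (Real.exp (2 * m) • lapl W (fun _ => 0) - lapl W u).PosSemidef := by
    rw [hdiff]
    refine GaussDom.glap_posSemidef _ (fun i j => by rw [hWsymm i j, add_comm]) (fun i j => ?_)
    refine mul_nonneg (hWnn i j) (sub_nonneg.mpr (Real.exp_le_exp.mpr ?_))
    have := hm_ge i; have := hm_ge j; linarith
  -- determinant comparison
  set f : {i : V // i ≠ j₀} → V := fun i => (i : V) with hf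
  have hD0 : 0 ≤ Dfun j₀ W (fun _ => 0) :=
    GaussDom.psd_det_nonneg ((hpsd _).submatrix f)
  have hdet : Dfun j₀ W u ≤ Real.exp (2 * m) ^ k * Dfun j₀ W (fun _ => 0) := by
    have h1 : ((lapl W u).submatrix f f).PosSemidef := (hpsd u).submatrix f
    have h2 : ((Real.exp (2 * m) • lapl W (fun _ => 0) - lapl W u).submatrix f f).PosSemidef :=
      hpsd_diff.submatrix f
    have h3 := GaussDom.det_le_det_add h1 h2
    have hsum : (lapl W u).submatrix f f
        + (Real.exp (2 * m) • lapl W (fun _ => 0) - lapl W u).submatrix f f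
        = Real.exp (2 * m) • ((lapl W (fun _ => 0)).submatrix f f) := by
      ext a b
      simp only [Matrix.add_apply, Matrix.submatrix_apply, Matrix.sub_apply, Matrix.smul_apply,
        smul_eq_mul]
      ring
    rw [hsum, Matrix.det_smul] at h3
    exact h3
  have hpow : Real.exp (2 * m) ^ k = Real.exp (m * k) ^ 2 := by
    rw [← Real.exp_nat_mul, sq, ← Real.exp_add]
    congr 1
    ring
  have hsqrt : Real.sqrt (Dfun j₀ W u)
      ≤ Real.exp (m * k) * Real.sqrt (Dfun j₀ W (fun _ => 0)) := by
    calc Real.sqrt (Dfun j₀ W u)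
        ≤ Real.sqrt (Real.exp (2 * m) ^ k * Dfun j₀ W (fun _ => 0)) := Real.sqrt_le_sqrt hdet
      _ = Real.exp (m * k) * Real.sqrt (Dfun j₀ W (fun _ => 0)) := by
          rw [hpow, Real.sqrt_mul (sq_nonneg _), Real.sqrt_sq (Real.exp_pos _).le]
  -- entropy bound
  have hH : (1 / 4) * (∑ i, ∑ j, W i j * (u i - u j) ^ 2) ≤ Hfun W u := by
    rw [Finset.mul_sum]
    refine Finset.sum_le_sum fun i _ => ?_
    rw [Finset.mul_sum]
    refine Finset.sum_le_sum fun j _ => ?_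
    have h := GaussDom.sq_le_sinh_sq ((u i - u j) / 2)
    have hw := hWnn i j
    nlinarith [h, hw]
  -- the sum bound
  have hS : Real.exp ((N : ℝ) * m)
      ≤ ∑ i, (Real.exp ((N : ℝ) * u i) + Real.exp (-((N : ℝ) * u i))) := by
    have h1 : Real.exp ((N : ℝ) * m) = Real.exp ((N : ℝ) * u i₁) := by
      rw [hm, hi₁]
    rw [h1]
    calc Real.exp ((N : ℝ) * u i₁)
        ≤ Real.exp ((N : ℝ) * u i₁) + Real.exp (-((N : ℝ) * u i₁)) :=
          le_add_of_nonneg_right (Real.exp_pos _).le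
      _ ≤ _ := Finset.single_le_sum
          (f := fun i => Real.exp ((N : ℝ) * u i) + Real.exp (-((N : ℝ) * u i)))
          (fun i _ => add_nonneg (Real.exp_pos _).le (Real.exp_pos _).le)
          (Finset.mem_univ i₁)
  have hfac : Real.exp (u i₀) * Real.exp (m * k) ≤ Real.exp ((N : ℝ) * m) := by
    rw [← Real.exp_add, Real.exp_le_exp]
    have h0 := hm_ge i₀
    have hNm : (N : ℝ) * m = m * (k : ℝ) + m := by rw [← hkR]; ring
    linarith [h0, hNm]
  -- putting everything together
  calc Real.exp (u i₀) * Real.exp (-Hfun W u) * Real.sqrt (Dfun j₀ W u)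
      ≤ Real.exp (u i₀) * Real.exp (-((1 / 4) * ∑ i, ∑ j, W i j * (u i - u j) ^ 2))
        * (Real.exp (m * k) * Real.sqrt (Dfun j₀ W (fun _ => 0))) := by
        have e1 : Real.exp (-Hfun W u)
            ≤ Real.exp (-((1 / 4) * ∑ i, ∑ j, W i j * (u i - u j) ^ 2)) :=
          Real.exp_le_exp.mpr (neg_le_neg hH)
        gcongr
    _ = (Real.exp (u i₀) * Real.exp (m * k))
        * Real.exp (-((1 / 4) * ∑ i, ∑ j, W i j * (u i - u j) ^ 2))
        * Real.sqrt (Dfun j₀ W (fun _ => 0)) := by ring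
    _ ≤ (∑ i, (Real.exp ((N : ℝ) * u i) + Real.exp (-((N : ℝ) * u i))))
        * Real.exp (-((1 / 4) * ∑ i, ∑ j, W i j * (u i - u j) ^ 2))
        * Real.sqrt (Dfun j₀ W (fun _ => 0)) := by
        have := hfac.trans hS
        gcongr
end
end

section
/- Determinant decomposition along self-avoiding paths: let Λ be a finite connected graph with positive edge weights β, distinguished vertices 0 and x in Λ, η>0 and t∈ℝ^Λ. Let A_Λ^{ηδ₀,β}(t) be the matrix with entries A_{ij}=−β_{ij}e^{t_i+t_j} for i≠j and A_{ii}=Σ_{l∼i} β_{il} e^{t_i+t_l} + η e^{t_i} 1_{i=0}. Let Γ_x be the set of self-avoiding paths in Λ from 0 to x, each identified with its set γ of edges and set Λ_γ of visited vertices, and Λ_γ^c = Λ∖Λ_γ. Then det A_Λ^{ηδ₀,β}(t) = η e^{t_0} Σ_{γ∈Γ_x} (∏_{{i,j}∈γ} β_{ij} e^{t_i+t_j}) · det A_{Λ_γ^c}^{ε(γ),β}(t), where A_{Λ_γ^c}^{ε(γ),β}(t) is the analogous matrix on Λ_γ^c with pinning ε(γ)_i = Σ_{k∈Λ_γ, k∼i}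 β_{ik} e^{t_k}, i.e. entries −β_{ij}e^{t_i+t_j} off the diagonal and Σ_{l∈Λ_γ^c, l∼i} β_{il} e^{t_i+t_l} + ε(γ)_i e^{t_i} on the diagonal (the determinant over the empty set being 1). -/
open MeasureTheory Real Filter

noncomputable section

variable {V : Type*} [Fintype V] [DecidableEq V]

/-- The matrix `A^{ε,β}(t)`: `A_{ij} = -β_{ij} e^{tᵢ+tⱼ}` for `i ≠ j` and
`A_{ii} = Σ_l β_{il} e^{tᵢ+t_l} + εᵢ e^{tᵢ}`. -/
def Amat (β : V → V → ℝ) (ε : V → ℝ) (t : V → ℝ) : Matrix V V ℝ :=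
  Matrix.of fun i j =>
    if i = j then (∑ l, β i l * Real.exp (t i + t l)) + ε i * Real.exp (t i)
    else -(β i j * Real.exp (t i + t j))

/-- The matrix `A_{Λ_γ^c}^{ε(γ),β}(t)` on the complement of the vertex set `L` of a path:
off-diagonal entries `-β_{ij}e^{tᵢ+tⱼ}`, diagonal entries
`Σ_{l∉L} β_{il} e^{tᵢ+t_l} + ε(γ)ᵢ e^{tᵢ}` with `ε(γ)ᵢ = Σ_{k∈L} β_{ik} e^{t_k}`. -/
def Acomp (β : V → V → ℝ) (t : V → ℝ) (L : List V) :
    Matrix {i : V // i ∉ L} {i : V // i ∉ L} ℝ :=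
  Matrix.of fun i j =>
    if i = j then
      (∑ l : {i : V // i ∉ L}, β (i : V) (l : V) * Real.exp (t (i : V) + t (l : V))) +
        (∑ k : V, if k ∈ L then β (i : V) k * Real.exp (t k) else 0) * Real.exp (t (i : V))
    else -(β (i : V) (j : V) * Real.exp (t (i : V) + t (j : V)))

section Helpers

open Matrix

variable {W : Type*} [Fintype W] [DecidableEq W]

/-- Two matrices whose `v`-th row is the standard basis vector `e_v` and which agree
outside row `v` and column `v` have the same determinant. -/
private lemma det_congr_row_single (M M' : Matrix W W ℝ) (v : W)
    (h : ∀ c, M v c = if c = v then 1 else 0)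
    (h' : ∀ c, M' v c = if c = v then 1 else 0)
    (hoff : ∀ i c, i ≠ v → c ≠ v → M i c = M' i c) : M.det = M'.det := by
  rw [Matrix.det_apply', Matrix.det_apply']
  refine Finset.sum_congr rfl fun σ _ => ?_
  by_cases hσ : σ v = v
  · congr 1
    refine Finset.prod_congr rfl fun i _ => ?_
    by_cases hi : i = v
    · subst hi; rw [hσ, h, h']
    · exact hoff _ _ (fun hc => hi (σ.injective (hc.trans hσ.symm))) hi
  · have key : ∀ N : Matrix W W ℝ, (∀ c, N v c = if c = v then 1 else 0) →
        (∏ i, N (σ i) i) = 0 := by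
      intro N hN
      refine Finset.prod_eq_zero (Finset.mem_univ (σ⁻¹ v)) ?_
      rw [Equiv.Perm.eq_inv_iff_eq.mp (rfl : σ⁻¹ v = σ⁻¹ v), hN, if_neg]
      intro hc
      apply hσ
      conv_lhs => rw [← hc]
      exact σ.apply_symm_apply v
    rw [key M h, key M' h']

/-- Column version of `det_congr_row_single`. -/
private lemma det_congr_col_single (M M' : Matrix W W ℝ) (v : W)
    (h : ∀ i, M i v = if i = v then 1 else 0)
    (h' : ∀ i, M' i v = if i = v then 1 else 0)
    (hoff : ∀ i c, i ≠ v → c ≠ v → M i c = M' i c) : M.det = M'.det := by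
  rw [← Matrix.det_transpose M, ← Matrix.det_transpose M']
  exact det_congr_row_single _ _ v h h' (fun i c hi hc => hoff c i hc hi)

/-- Multilinearity of the determinant in one column, summed form. -/
private lemma det_updateCol_finset_sum (M : Matrix W W ℝ) (r : W) (f : W → W → ℝ)
    (s : Finset W) :
    (M.updateCol r (fun i => ∑ j ∈ s, f j i)).det
      = ∑ j ∈ s, (M.updateCol r (f j)).det := by
  classical
  induction s using Finset.induction_on with
  | empty =>
      simp only [Finset.sum_empty]
      exact Matrix.det_eq_zero_of_column_eq_zero r (fun i => by simp)
  | @insert a s' hnot ih =>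
      have hfun : (fun i => ∑ j ∈ insert a s', f j i)
          = (f a + fun i => ∑ j ∈ s', f j i) := by
        funext i
        rw [Finset.sum_insert hnot]
        rfl
      rw [hfun, Matrix.det_updateCol_add, ih, Finset.sum_insert hnot]

/-- The matrix `M` padded with the identity on the rows/columns in `R`. -/
def padMat (M : Matrix W W ℝ) (R : Finset W) : Matrix W W ℝ :=
  Matrix.of fun i j => if i ∈ R ∨ j ∈ R then (if i = j then 1 else 0) else M i j

lemma padMat_empty (M : Matrix W W ℝ) : padMat M ∅ = M := by
  ext i j; simp [padMat]

end Helpers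

section Main

open Matrix SimpleGraph

/-- The term attached to a path in the decomposition, relative to a removed set `R`. -/
def pathTerm (β : V → V → ℝ) (t : V → ℝ) {G : SimpleGraph V} (R : Finset V) {u x : V}
    (p : G.Path u x) : ℝ :=
  if ∀ v ∈ (p : G.Walk u x).support, v ∉ R then
    ((p : G.Walk u x).darts.map
      (fun d => β d.toProd.1 d.toProd.2 * Real.exp (t d.toProd.1 + t d.toProd.2))).prod *
      (padMat (Amat β (fun _ => 0) t) (R ∪ (p : G.Walk u x).support.toFinset)).det
  else 0

private lemma mem_iff_aux {R : Finset V} {v0 i c : V} (hi : i ≠ v0) (hc : c ≠ v0) :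
    ((i = v0 ∨ i ∈ R) ∨ c = v0 ∨ c ∈ R) ↔ (i ∈ R ∨ c ∈ R) := by
  constructor
  · rintro ((rfl | h) | (rfl | h))
    · exact absurd rfl hi
    · exact Or.inl h
    · exact absurd rfl hc
    · exact Or.inr h
  · rintro (h | h)
    · exact Or.inl (Or.inr h)
    · exact Or.inr (Or.inr h)

lemma case_base (β : V → V → ℝ) (t : V → ℝ) (R : Finset V) (v0 : V) (hv0 : v0 ∉ R) :
    ((padMat (Amat β (fun _ => 0) t) R).updateRow v0 (Pi.single v0 1)).det
      = (padMat (Amat β (fun _ => 0) t) (insert v0 R)).det := by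
  refine det_congr_row_single _ _ v0 (fun c => by simp [Pi.single_apply]) (fun c => ?_)
    (fun i c hi hc => ?_)
  · show padMat (Amat β (fun _ => 0) t) (insert v0 R) v0 c = _
    rw [padMat, Matrix.of_apply, if_pos (Or.inl (Finset.mem_insert_self v0 R))]
    by_cases hcv : c = v0
    · subst hcv; simp
    · rw [if_neg (Ne.symm hcv), if_neg hcv]
  · rw [Matrix.updateRow_ne hi]
    simp only [padMat, Matrix.of_apply, Finset.mem_insert]
    rw [if_congr (mem_iff_aux hi hc) rfl rfl]

lemma swap_step (β : V → V → ℝ) (t : V → ℝ) (R : Finset V) (v0 j x : V)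
    (hv0 : v0 ∉ R) (hj : j ∉ R) (hjv0 : j ≠ v0) (hx : x ≠ v0) :
    (((padMat (Amat β (fun _ => 0) t) R).updateRow v0 (Pi.single x 1)).updateCol v0
        (Pi.single j 1)).det
      = -((padMat (Amat β (fun _ => 0) t) (insert v0 R)).updateRow j (Pi.single x 1)).det := by
  set A0 := Amat β (fun _ => 0) t with hA0
  set K := ((padMat A0 R).updateRow v0 (Pi.single x 1)).updateCol v0 (Pi.single j 1) with hK
  set N := (padMat A0 (insert v0 R)).updateRow j (Pi.single x 1) with hN
  have hperm := Matrix.det_permute (Equiv.swap v0 j) K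
  rw [Equiv.Perm.sign_swap (Ne.symm hjv0)] at hperm
  have hKN : (K.submatrix (Equiv.swap v0 j) id).det = N.det := by
    refine det_congr_col_single _ _ v0 (fun i => ?_) (fun i => ?_) (fun i c hi hc => ?_)
    · show K (Equiv.swap v0 j i) v0 = _
      rw [hK, Matrix.updateCol_self, Pi.single_apply]
      by_cases hiv : i = v0
      · subst hiv; simp
      · rw [if_neg, if_neg hiv]
        intro hcon
        apply hiv
        have := congrArg (Equiv.swap v0 j) hcon
        simpa using this
    · rw [hN]
      by_cases hij : i = j
      · subst hij
        rw [Matrix.updateRow_self, Pi.single_apply, if_neg (Ne.symm hx), if_neg hjv0]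
      · rw [Matrix.updateRow_ne hij]
        show padMat A0 (insert v0 R) i v0 = _
        rw [padMat, Matrix.of_apply, if_pos (Or.inr (Finset.mem_insert_self v0 R))]
    · show K (Equiv.swap v0 j i) c = N i c
      by_cases hij : i = j
      · subst hij
        rw [hK, hN, Equiv.swap_apply_right, Matrix.updateCol_ne hc,
          Matrix.updateRow_self, Matrix.updateRow_self]
      · have hswap : Equiv.swap v0 j i = i := Equiv.swap_apply_of_ne_of_ne hi hij
        rw [hK, hN, hswap, Matrix.updateCol_ne hc, Matrix.updateRow_ne hi,
          Matrix.updateRow_ne hij]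
        simp only [padMat, Matrix.of_apply, Finset.mem_insert]
        rw [if_congr (mem_iff_aux hi hc) rfl rfl]
  rw [← hKN, hperm]
  push_cast
  ring

lemma sum_loop_path (G : SimpleGraph V) [DecidableRel G.Adj] (v0 : V)
    (f : G.Path v0 v0 → ℝ) : ∑ p : G.Path v0 v0, f p = f SimpleGraph.Path.nil :=
  Fintype.sum_eq_single _ (fun p hp => absurd (SimpleGraph.Path.loop_eq p) hp)

lemma key_lemma (G : SimpleGraph V) [DecidableRel G.Adj] (β : V → V → ℝ) (t : V → ℝ)
    (hβsymm : ∀ i j, β i j = β j i) (hβzero : ∀ i j, ¬ G.Adj i j → β i j = 0)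
    (n : ℕ) :
    ∀ (R : Finset V) (v0 x : V), v0 ∉ R → x ∉ R → Rᶜ.card ≤ n →
    ((padMat (Amat β (fun _ => 0) t) R).updateRow v0 (Pi.single x 1)).det
      = ∑ p : G.Path v0 x, pathTerm β t R p := by
  induction n with
  | zero =>
      intro R v0 x hv0 hx hcard
      exact absurd (Finset.card_eq_zero.mp (Nat.le_zero.mp hcard))
        (Finset.nonempty_iff_ne_empty.mp ⟨v0, Finset.mem_compl.mpr hv0⟩)
  | succ n ih =>
      intro R v0 x hv0 hx hcard
      by_cases hxv : x = v0
      · subst hxv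
        rw [case_base β t R x hv0, sum_loop_path, pathTerm,
          if_pos (by
            intro v hv
            simp only [SimpleGraph.Path.nil, SimpleGraph.Walk.support_nil, List.mem_cons,
              List.not_mem_nil, or_false] at hv
            subst hv; exact hv0)]
        simp only [SimpleGraph.Path.nil, SimpleGraph.Walk.darts_nil, List.map_nil,
          List.prod_nil, one_mul, SimpleGraph.Walk.support_nil, List.toFinset_cons,
          List.toFinset_nil, insert_empty_eq]
        rw [show R ∪ ({x} : Finset V) = insert x R from by ext v; simp [or_comm]]
      · -- main step
        set A0 := Amat β (fun _ => 0) t with hA0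
        set M := (padMat A0 R).updateRow v0 (Pi.single x 1) with hM
        set coeff : V → ℝ := fun j =>
          if j ∈ insert v0 R then 0 else -(β v0 j * Real.exp (t v0 + t j)) with hcoeff
        have hMcol : ∀ i, M i v0 = coeff i := by
          intro i
          by_cases hiv : i = v0
          · subst hiv
            rw [hM, Matrix.updateRow_self, Pi.single_apply, if_neg (Ne.symm hxv)]
            rw [hcoeff]
            simp
          · rw [hM, Matrix.updateRow_ne hiv, hcoeff]
            simp only [Finset.mem_insert]
            by_cases hiR : i ∈ R
            · rw [if_pos (Or.inr hiR)]
              simp [padMat, hiR, hiv]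
            · rw [if_neg (by push_neg; exact ⟨hiv, hiR⟩)]
              simp only [padMat, Matrix.of_apply, hA0, Amat,
                if_neg (show ¬(i ∈ R ∨ v0 ∈ R) by push_neg; exact ⟨hiR, hv0⟩), if_neg hiv]
              rw [hβsymm i v0, add_comm (t i) (t v0)]
        have hMeq : M = M.updateCol v0 (fun i => ∑ j, coeff j • (Pi.single j 1 : V → ℝ) i) := by
          have heq : (fun i => ∑ j, coeff j • (Pi.single j 1 : V → ℝ) i) = fun i => M i v0 := by
            funext i
            simp only [Pi.single_apply, smul_eq_mul, mul_ite, mul_one, mul_zero]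
            rw [Finset.sum_ite_eq Finset.univ i coeff, if_pos (Finset.mem_univ i), hMcol]
          rw [heq, Matrix.updateCol_eq_self]
        have hdet : M.det = ∑ j, coeff j * (M.updateCol v0 (Pi.single j 1)).det := by
          conv_lhs => rw [hMeq]
          rw [det_updateCol_finset_sum M v0 (fun j i => coeff j • (Pi.single j 1 : V → ℝ) i)
            Finset.univ]
          refine Finset.sum_congr rfl fun j _ => ?_
          rw [show (fun i => coeff j • (Pi.single j 1 : V → ℝ) i) = coeff j • (Pi.single j 1 : V → ℝ) from rfl,
            Matrix.det_updateCol_smul]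
        rw [hdet]
        have hcard' : (insert v0 R)ᶜ.card ≤ n := by
          rw [Finset.compl_insert]
          have h1 : v0 ∈ Rᶜ := Finset.mem_compl.mpr hv0
          have h2 := Finset.card_erase_of_mem h1
          have h3 : 1 ≤ Rᶜ.card := Finset.card_pos.mpr ⟨v0, h1⟩
          omega
        have hstep : ∀ j, coeff j * (M.updateCol v0 (Pi.single j 1)).det
            = ∑ q : G.Path j x, β v0 j * Real.exp (t v0 + t j)
                * pathTerm β t (insert v0 R) q := by
          intro j
          by_cases hjmem : j ∈ insert v0 R
          · rw [hcoeff]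
            simp only [if_pos hjmem, zero_mul]
            symm
            refine Finset.sum_eq_zero fun q _ => ?_
            rw [pathTerm, if_neg, mul_zero]
            push_neg
            exact ⟨j, SimpleGraph.Walk.start_mem_support _, hjmem⟩
          · have hjv0 : j ≠ v0 := fun hc => hjmem (by rw [hc]; exact Finset.mem_insert_self _ _)
            have hjR : j ∉ R := fun hc => hjmem (Finset.mem_insert_of_mem hc)
            rw [hcoeff]
            simp only [if_neg hjmem]
            rw [hM, swap_step β t R v0 j x hv0 hjR hjv0 hxv]
            rw [ih (insert v0 R) j x hjmem
              (by simp only [Finset.mem_insert]; push_neg; exact ⟨hxv, hx⟩) hcard']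
            rw [neg_mul_neg, Finset.mul_sum]
        rw [Finset.sum_congr rfl (fun j _ => hstep j)]
        -- reindex the double sum over (j, q) as a sum over paths from v0 to x
        rw [Finset.sum_sigma Finset.univ (fun _ => Finset.univ)
          (fun z : (j : V) × G.Path j x =>
            β v0 z.1 * Real.exp (t v0 + t z.1) * pathTerm β t (insert v0 R) z.2) |>.symm]
        rw [← Finset.sum_filter_of_ne
          (p := fun z : (j : V) × G.Path j x =>
            G.Adj v0 z.1 ∧ v0 ∉ (z.2 : G.Walk z.1 x).support)
          (fun z _ hz0 => ?_)]
        · refine Finset.sum_bij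
            (fun z hz => (⟨SimpleGraph.Walk.cons (Finset.mem_filter.mp hz).2.1 z.2.val,
              SimpleGraph.Walk.IsPath.cons z.2.prop (Finset.mem_filter.mp hz).2.2⟩
                : G.Path v0 x))
            (fun z hz => Finset.mem_univ _) ?_ ?_ ?_
          · rintro ⟨j, q⟩ ha ⟨j', q'⟩ hb heq
            have hval := congrArg Subtype.val heq
            simp only at hval
            injection hval with h1 h2 h3 h4
            subst h2
            exact congrArg (fun r => (⟨j, r⟩ : (u : V) × G.Path u x))
              (Subtype.ext (eq_of_heq h4))
          · intro p _
            obtain ⟨w, hwp⟩ := p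
            cases w with
            | nil => exact absurd rfl hxv
            | cons hadj q =>
              have hq := (SimpleGraph.Walk.cons_isPath_iff hadj q).mp hwp
              refine ⟨⟨_, ⟨q, hq.1⟩⟩, ?_, rfl⟩
              rw [Finset.mem_filter]
              exact ⟨Finset.mem_sigma.mpr ⟨Finset.mem_univ _, Finset.mem_univ _⟩, hadj, hq.2⟩
          · rintro ⟨j, q⟩ hz
            obtain ⟨-, hadj, hnm⟩ := Finset.mem_filter.mp hz
            show β v0 j * Real.exp (t v0 + t j) * pathTerm β t (insert v0 R) q = _
            rw [pathTerm, pathTerm]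
            by_cases hcond : ∀ v ∈ (q : G.Walk j x).support, v ∉ insert v0 R
            · rw [if_pos hcond, if_pos]
              · simp only [SimpleGraph.Walk.darts_cons, List.map_cons, List.prod_cons,
                  SimpleGraph.Walk.support_cons, List.toFinset_cons, Finset.union_insert,
                  ← Finset.insert_union]
                ring
              · intro v hv
                simp only [SimpleGraph.Walk.support_cons, List.mem_cons] at hv
                rcases hv with rfl | hv
                · exact hv0
                · exact fun hc => hcond v hv (Finset.mem_insert_of_mem hc)
            · rw [if_neg hcond, if_neg, mul_zero]
              push_neg at hcond
              obtain ⟨v, hvmem, hvR⟩ := hcond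
              push_neg
              refine ⟨v, ?_, ?_⟩
              · simp only [SimpleGraph.Walk.support_cons, List.mem_cons]
                exact Or.inr hvmem
              · rcases Finset.mem_insert.mp hvR with rfl | h
                · exact absurd hvmem hnm
                · exact h
        · -- vanishing off the filter
          show G.Adj v0 z.1 ∧ v0 ∉ (z.2 : G.Walk z.1 x).support
          by_contra hP
          rw [not_and_or] at hP
          apply hz0
          rcases hP with hadj | hmem
          · rw [hβzero v0 z.1 hadj]; ring
          · rw [not_not] at hmem
            rw [pathTerm, if_neg, mul_zero]
            push_neg
            exact ⟨v0, hmem, Finset.mem_insert_self v0 R⟩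

lemma diag_split (β : V → V → ℝ) (t : V → ℝ) (L : List V) (a : V) :
    (∑ l, β a l * Real.exp (t a + t l)) =
      (∑ l : {i : V // i ∉ L}, β a l.val * Real.exp (t a + t l.val)) +
        (∑ k : V, if k ∈ L then β a k * Real.exp (t k) else 0) * Real.exp (t a) := by
  classical
  have h2 : (∑ k : V, if k ∈ L then β a k * Real.exp (t k) else 0) * Real.exp (t a)
      = ∑ k : V, if k ∈ L then β a k * Real.exp (t a + t k) else 0 := by
    rw [Finset.sum_mul]
    refine Finset.sum_congr rfl fun k _ => ?_
    by_cases hk : k ∈ L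
    · rw [if_pos hk, if_pos hk, Real.exp_add]; ring
    · rw [if_neg hk, if_neg hk, zero_mul]
  have h1 : (∑ l : {i : V // i ∉ L}, β a l.val * Real.exp (t a + t l.val))
      = ∑ k : V, if k ∉ L then β a k * Real.exp (t a + t k) else 0 := by
    rw [← Finset.sum_subtype (Finset.univ.filter (fun l : V => l ∉ L)) (fun l => by simp)
      (fun l => β a l * Real.exp (t a + t l)), Finset.sum_filter]
  rw [h1, h2, ← Finset.sum_add_distrib]
  refine Finset.sum_congr rfl fun k _ => ?_
  by_cases hk : k ∈ L <;> simp [hk]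

lemma det_pad_eq_Acomp (β : V → V → ℝ) (t : V → ℝ) (L : List V) :
    (padMat (Amat β (fun _ => 0) t) L.toFinset).det = (Acomp β t L).det := by
  classical
  let e : {i : V // i ∉ L} ⊕ {i : V // ¬ i ∉ L} ≃ V := Equiv.sumCompl (fun i : V => i ∉ L)
  have hblock : (padMat (Amat β (fun _ => 0) t) L.toFinset).submatrix e e
      = Matrix.fromBlocks (Acomp β t L) 0 0 1 := by
    ext i j
    cases i with
    | inl a =>
      cases j with
      | inl b =>
        show padMat (Amat β (fun _ => 0) t) L.toFinset a.val b.val = Acomp β t L a b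
        have hcond : ¬(a.val ∈ L.toFinset ∨ b.val ∈ L.toFinset) := by
          push_neg
          refine ⟨fun h => a.prop (List.mem_toFinset.mp h),
            fun h => b.prop (List.mem_toFinset.mp h)⟩
        rw [padMat, Matrix.of_apply, if_neg hcond, Amat, Acomp, Matrix.of_apply,
          Matrix.of_apply]
        by_cases hab : a = b
        · subst hab
          rw [if_pos rfl, if_pos rfl, zero_mul, add_zero]
          exact diag_split β t L a.val
        · rw [if_neg (fun h : a.val = b.val => hab (Subtype.ext h)), if_neg hab]
      | inr b =>
        show padMat (Amat β (fun _ => 0) t) L.toFinset a.val b.val = 0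
        have hb : b.val ∈ L := not_not.mp b.prop
        rw [padMat, Matrix.of_apply, if_pos (Or.inr (List.mem_toFinset.mpr hb)), if_neg]
        intro h
        exact a.prop (h ▸ hb)
    | inr a =>
      have ha : a.val ∈ L := not_not.mp a.prop
      cases j with
      | inl b =>
        show padMat (Amat β (fun _ => 0) t) L.toFinset a.val b.val = 0
        rw [padMat, Matrix.of_apply, if_pos (Or.inl (List.mem_toFinset.mpr ha)), if_neg]
        intro h
        exact b.prop (h ▸ ha)
      | inr b =>
        show padMat (Amat β (fun _ => 0) t) L.toFinset a.val b.val
          = (1 : Matrix {i : V // ¬ i ∉ L} {i : V // ¬ i ∉ L} ℝ) a b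
        rw [padMat, Matrix.of_apply, if_pos (Or.inl (List.mem_toFinset.mpr ha)),
          Matrix.one_apply]
        by_cases hab : a = b
        · subst hab; rw [if_pos rfl, if_pos rfl]
        · rw [if_neg (fun h : a.val = b.val => hab (Subtype.ext h)), if_neg hab]
  rw [← Matrix.det_submatrix_equiv_self e, hblock, Matrix.det_fromBlocks_zero₂₁,
    Matrix.det_one, mul_one]

end Main

/-- Theorem (determinant decomposition along self-avoiding paths):
`det A_Λ^{ηδ₀,β}(t) = η e^{t₀} Σ_{γ∈Γ_x} (∏_{{i,j}∈γ} β_{ij} e^{tᵢ+tⱼ})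
  det A_{Λ_γ^c}^{ε(γ),β}(t)`. -/
theorem det_decomposition_along_paths
    (G : SimpleGraph V) [DecidableRel G.Adj] (hconn : G.Connected)
    (β : V → V → ℝ) (hβsymm : ∀ i j, β i j = β j i)
    (hβpos : ∀ i j, G.Adj i j → 0 < β i j)
    (hβzero : ∀ i j, ¬ G.Adj i j → β i j = 0)
    (v0 x : V) (η : ℝ) (hη : 0 < η) (t : V → ℝ) :
    (Amat β (fun i => if i = v0 then η else 0) t).det =
      η * Real.exp (t v0) *
        ∑ p : G.Path v0 x,
          (((p : G.Walk v0 x).darts.map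
            (fun d => β d.toProd.1 d.toProd.2 *
              Real.exp (t d.toProd.1 + t d.toProd.2))).prod *
            (Acomp β t (p : G.Walk v0 x).support).det) := by
  classical
  set A := Amat β (fun i => if i = v0 then η else 0) t with hA
  have hβdiag : ∀ i, β i i = 0 := fun i => hβzero i i (G.irrefl)
  -- row sums of A
  have hrowsum : Matrix.mulVec A (fun _ => 1) = Pi.single v0 (η * Real.exp (t v0)) := by
    funext i
    rw [Matrix.mulVec]
    simp only [dotProduct, mul_one]
    rw [show (∑ j, A i j) = (A i i + ∑ j ∈ Finset.univ.erase i, A i j) from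
      (Finset.add_sum_erase _ _ (Finset.mem_univ i)).symm]
    have h1 : ∑ j ∈ Finset.univ.erase i, A i j
        = -∑ j ∈ Finset.univ.erase i, β i j * Real.exp (t i + t j) := by
      rw [← Finset.sum_neg_distrib]
      refine Finset.sum_congr rfl fun j hj => ?_
      rw [hA, Amat, Matrix.of_apply, if_neg (Ne.symm (Finset.ne_of_mem_erase hj))]
    rw [h1, hA, Amat, Matrix.of_apply, if_pos rfl]
    rw [show (∑ l, β i l * Real.exp (t i + t l))
        = (β i i * Real.exp (t i + t i)
            + ∑ l ∈ Finset.univ.erase i, β i l * Real.exp (t i + t l)) from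
      (Finset.add_sum_erase _ _ (Finset.mem_univ i)).symm]
    rw [hβdiag i, zero_mul, zero_add, Pi.single_apply]
    by_cases hiv : i = v0
    · subst hiv; rw [if_pos rfl, if_pos rfl]; ring
    · rw [if_neg hiv, if_neg hiv]; ring
  -- determinant via the adjugate
  have hdetA : A.det = η * Real.exp (t v0) * A.adjugate x v0 := by
    have h1 : Matrix.mulVec A.adjugate (Matrix.mulVec A (fun _ => 1))
        = A.det • (fun _ => (1:ℝ)) := by
      rw [Matrix.mulVec_mulVec, Matrix.adjugate_mul, Matrix.smul_mulVec,
        Matrix.one_mulVec]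
    rw [hrowsum] at h1
    have h2 := congrFun h1 x
    simp only [Pi.smul_apply, smul_eq_mul, mul_one] at h2
    rw [show Pi.single v0 (η * Real.exp (t v0)) = (η * Real.exp (t v0)) • (Pi.single v0 1 : V → ℝ) by
      ext u
      rw [Pi.smul_apply, Pi.single_apply, Pi.single_apply, smul_eq_mul]
      by_cases hu : u = v0 <;> simp [hu]] at h2
    rw [Matrix.mulVec_smul] at h2
    have h3 : (Matrix.mulVec A.adjugate (Pi.single v0 (1:ℝ))) x = A.adjugate x v0 := by
      rw [Matrix.mulVec_single]
      simp
    rw [Pi.smul_apply, h3, smul_eq_mul] at h2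
    rw [← h2]
  rw [hdetA, Matrix.adjugate_apply]
  have hupdate : A.updateRow v0 (Pi.single x 1)
      = (padMat (Amat β (fun _ => 0) t) ∅).updateRow v0 (Pi.single x 1) := by
    rw [padMat_empty]
    ext i j
    by_cases hiv : i = v0
    · subst hiv; rw [Matrix.updateRow_self, Matrix.updateRow_self]
    · rw [Matrix.updateRow_ne hiv, Matrix.updateRow_ne hiv, hA]
      by_cases hij : i = j
      · subst hij
        simp [Amat, hiv]
      · simp [Amat, hij]
  rw [hupdate, key_lemma G β t hβsymm hβzero (Fintype.card V) ∅ v0 x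
    (Finset.notMem_empty v0) (Finset.notMem_empty x)
    (by rw [Finset.compl_empty]; exact le_of_eq (Finset.card_univ))]
  congr 1
  refine Finset.sum_congr rfl fun p _ => ?_
  rw [pathTerm, if_pos (fun v _ => Finset.notMem_empty v), Finset.empty_union,
    det_pad_eq_Acomp]
end
end

section
/- Monotonicity of the pinned determinant: let V be a finite set with edge set E_V and t∈ℝ^V. For nonnegative symmetric weights β=(β_e)_{e∈E_V} and nonnegative pinning ε∈[0,∞)^V, let A^{ε,β}(t) be the matrix with A_{ij}=−β_{ij}e^{t_i+t_j} for i≠j and A_{ii}=Σ_l β_{il} e^{t_i+t_l} + ε_i e^{t_i}. If β ≤ β' and ε ≤ ε' entrywise, then 0 ≤ det A^{ε,β}(t) ≤ det A^{ε',β'}(t). In particular, replacing each β_e for e in a subset S⊂E_V by min(β_e,1) decreases the determinant by a factor at most ∏_{e∈S} max(β_e,1): det A^{ε,β}(t) ≤ (∏_{e∈S} max(β_e,1)) det A^{ε̃,β̃}(t), where β̃_e=min(β_e,1) for e∈S, β̃_e=β_e otherwise, and ε̃ is built from β̃ in the same way ε was built from β whenever ε has that form. -/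
open MeasureTheory Real Filter

noncomputable section

variable {V : Type*} [Fintype V] [DecidableEq V]

open Matrix

lemma Amat_posSemidef (t : V → ℝ) (β : V → V → ℝ) (ε : V → ℝ)
    (hβsymm : ∀ i j, β i j = β j i) (hβdiag : ∀ i, β i i = 0)
    (hβ0 : ∀ i j, 0 ≤ β i j) (hε0 : ∀ i, 0 ≤ ε i) :
    (Amat β ε t).PosSemidef := by
  set w : V → V → ℝ := fun i j => β i j * Real.exp (t i + t j) with hw
  have hwsymm : ∀ i j, w i j = w j i := fun i j => by
    simp only [hw]; rw [hβsymm i j, add_comm]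
  have hw0 : ∀ i j, 0 ≤ w i j := fun i j =>
    mul_nonneg (hβ0 i j) (Real.exp_pos _).le
  refine Matrix.PosSemidef.of_dotProduct_mulVec_nonneg ?_ ?_
  · ext i j
    simp only [Amat, conjTranspose_apply, of_apply, star_trivial]
    by_cases h : i = j
    · subst h; rfl
    · rw [if_neg (Ne.symm h), if_neg h, hβsymm j i, add_comm (t j) (t i)]
  · intro x
    rw [star_trivial]
    have hrow : ∀ i, (Amat β ε t *ᵥ x) i
        = (∑ j, w i j) * x i + ε i * Real.exp (t i) * x i - ∑ j, w i j * x j := by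
      intro i
      simp only [mulVec, dotProduct, Amat, of_apply]
      have : ∀ j : V, (if i = j then (∑ l, β i l * Real.exp (t i + t l)) + ε i * Real.exp (t i)
            else -(β i j * Real.exp (t i + t j))) * x j
          = (if i = j then ((∑ l, w i l) + ε i * Real.exp (t i) + w i j) * x j else 0)
            - w i j * x j := by
        intro j
        by_cases h : i = j
        · subst h
          rw [if_pos rfl, if_pos rfl]
          have : w i i = 0 := by simp [hw, hβdiag i]
          rw [this]; ring
        · rw [if_neg h, if_neg h]; simp only [hw]; ring
      rw [Finset.sum_congr rfl fun j _ => this j, Finset.sum_sub_distrib,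
        Finset.sum_ite_eq, if_pos (Finset.mem_univ i)]
      have : w i i = 0 := by simp [hw, hβdiag i]
      rw [this]; ring
    have hdp : x ⬝ᵥ (Amat β ε t *ᵥ x)
        = (∑ i, ∑ j, w i j * (x i * x i - x i * x j))
          + ∑ i, ε i * Real.exp (t i) * (x i * x i) := by
      simp only [dotProduct]
      rw [← Finset.sum_add_distrib]
      refine Finset.sum_congr rfl fun i _ => ?_
      rw [hrow i]
      have e1 : x i * ((∑ j, w i j) * x i + ε i * Real.exp (t i) * x i - ∑ j, w i j * x j)
          = ((∑ j, w i j) * (x i * x i) - (∑ j, w i j * x j) * x i)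
            + ε i * Real.exp (t i) * (x i * x i) := by ring
      rw [e1, Finset.sum_mul, Finset.sum_mul, ← Finset.sum_sub_distrib]
      congr 1
      exact Finset.sum_congr rfl fun j _ => by ring
    rw [hdp]
    have hS : 0 ≤ ∑ i, ∑ j, w i j * (x i * x i - x i * x j) := by
      have h2 : (∑ i, ∑ j, w i j * (x i * x i - x i * x j)) * 2
          = ∑ i, ∑ j, w i j * (x i - x j) ^ 2 := by
        have hcomm : (∑ i, ∑ j, w i j * (x i * x i - x i * x j))
            = ∑ i, ∑ j, w i j * (x j * x j - x j * x i) := by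
          rw [Finset.sum_comm]
          exact Finset.sum_congr rfl fun i _ => Finset.sum_congr rfl fun j _ => by
            rw [hwsymm j i]
        calc (∑ i, ∑ j, w i j * (x i * x i - x i * x j)) * 2
            = (∑ i, ∑ j, w i j * (x i * x i - x i * x j))
              + ∑ i, ∑ j, w i j * (x j * x j - x j * x i) := by rw [← hcomm]; ring
          _ = ∑ i, ∑ j, (w i j * (x i * x i - x i * x j) + w i j * (x j * x j - x j * x i)) := by
              rw [← Finset.sum_add_distrib]
              exact Finset.sum_congr rfl fun i _ => by rw [← Finset.sum_add_distrib]
          _ = ∑ i, ∑ j, w i j * (x i - x j) ^ 2 :=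
              Finset.sum_congr rfl fun i _ => Finset.sum_congr rfl fun j _ => by ring
      have hnn : 0 ≤ ∑ i, ∑ j, w i j * (x i - x j) ^ 2 :=
        Finset.sum_nonneg fun i _ => Finset.sum_nonneg fun j _ =>
          mul_nonneg (hw0 i j) (sq_nonneg _)
      linarith
    have hS2 : 0 ≤ ∑ i, ε i * Real.exp (t i) * (x i * x i) :=
      Finset.sum_nonneg fun i _ =>
        mul_nonneg (mul_nonneg (hε0 i) (Real.exp_pos _).le) (mul_self_nonneg _)
    linarith

lemma Amat_add (t : V → ℝ) (β β' : V → V → ℝ) (ε ε' : V → ℝ) :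
    Amat (fun i j => β i j + β' i j) (fun i => ε i + ε' i) t = Amat β ε t + Amat β' ε' t := by
  ext i j
  by_cases h : i = j
  · subst h
    simp only [Amat, of_apply, if_pos rfl, Matrix.add_apply]
    rw [Finset.sum_congr rfl (fun l (_ : l ∈ Finset.univ) => add_mul (β i l) (β' i l) (Real.exp (t i + t l))),
      Finset.sum_add_distrib]
    simp only [if_true]
    ring
  · simp only [Amat, of_apply, if_neg h, Matrix.add_apply]
    ring

lemma psd_det_nonneg {A : Matrix V V ℝ} (hA : A.PosSemidef) : 0 ≤ A.det := by
  rw [hA.1.det_eq_prod_eigenvalues]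
  exact Finset.prod_nonneg fun i _ => by simpa using hA.eigenvalues_nonneg i

lemma det_one_add_psd {D : Matrix V V ℝ} (hD : D.PosSemidef) : 1 ≤ (1 + D).det := by
  set U : Matrix V V ℝ := (hD.1.eigenvectorUnitary : Matrix V V ℝ)
  have hU : star U * U = 1 := Matrix.mem_unitaryGroup_iff'.mp hD.1.eigenvectorUnitary.2
  have hdetU : (star U).det * U.det = 1 := by
    rw [← det_mul, hU, det_one]
  have hdiag : star U * D * U = diagonal (RCLike.ofReal ∘ hD.1.eigenvalues) :=
    by simpa [Unitary.conjStarAlgAut_apply] using hD.1.conjStarAlgAut_star_eigenvectorUnitary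
  have key : star U * (1 + D) * U = diagonal (fun i => 1 + hD.1.eigenvalues i) := by
    rw [mul_add, add_mul, mul_one, hU, hdiag]
    rw [← diagonal_one, diagonal_add]
    rfl
  have hdet : (1 + D).det = ∏ i, (1 + hD.1.eigenvalues i) := by
    have := congrArg Matrix.det key
    rw [det_mul, det_mul, det_diagonal] at this
    have h2 : (star U).det * ((1 + D).det * U.det) = (star U).det * (1 + D).det * U.det := by ring
    calc (1 + D).det = ((star U).det * U.det) * (1 + D).det := by rw [hdetU]; ring
      _ = (star U).det * (1 + D).det * U.det := by ring
      _ = ∏ i, (1 + hD.1.eigenvalues i) := this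
  rw [hdet]
  calc (1:ℝ) = ∏ _i : V, 1 := by simp
    _ ≤ ∏ i, (1 + hD.1.eigenvalues i) :=
        Finset.prod_le_prod (fun _ _ => zero_le_one)
          (fun i _ => by linarith [hD.eigenvalues_nonneg i])

open scoped MatrixOrder in
lemma det_le_det_add_psd {A C : Matrix V V ℝ} (hA : A.PosSemidef) (hC : C.PosSemidef) :
    A.det ≤ (A + C).det := by
  by_cases hdet : A.det = 0
  · rw [hdet]; exact psd_det_nonneg (hA.add hC)
  · set S := CFC.sqrt A with hSdef
    have hS : S * S = A := CFC.sqrt_mul_sqrt_self A hA.nonneg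
    have hSpsd : S.PosSemidef := (CFC.sqrt_nonneg A).posSemidef
    have hSdet : IsUnit S.det := by
      rw [isUnit_iff_ne_zero]
      intro h
      apply hdet
      rw [← hS, det_mul, h, zero_mul]
    have hSinvH : S⁻¹ᴴ = S⁻¹ := by
      rw [conjTranspose_nonsing_inv, hSpsd.1.eq]
    have hDpsd : (S⁻¹ * C * S⁻¹).PosSemidef := by
      have := hC.conjTranspose_mul_mul_same S⁻¹
      rwa [hSinvH] at this
    have hfact : A + C = S * (1 + S⁻¹ * C * S⁻¹) * S := by
      rw [mul_add, mul_one, add_mul, hS]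
      congr 1
      symm
      calc S * (S⁻¹ * C * S⁻¹) * S = (S * S⁻¹) * C * (S⁻¹ * S) := by
            simp only [Matrix.mul_assoc]
        _ = C := by rw [mul_nonsing_inv _ hSdet, nonsing_inv_mul _ hSdet, one_mul, mul_one]
    have hAdetpos : 0 ≤ A.det := psd_det_nonneg hA
    rw [hfact, det_mul, det_mul]
    have h1 : 1 ≤ (1 + S⁻¹ * C * S⁻¹).det := det_one_add_psd hDpsd
    have h2 : S.det * S.det = A.det := by rw [← det_mul, hS]
    nlinarith [sq_nonneg (S.det)]

lemma det_Amat_nonneg (t : V → ℝ) (β : V → V → ℝ) (ε : V → ℝ)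
    (hβsymm : ∀ i j, β i j = β j i) (hβdiag : ∀ i, β i i = 0)
    (hβ0 : ∀ i j, 0 ≤ β i j) (hε0 : ∀ i, 0 ≤ ε i) :
    0 ≤ (Amat β ε t).det :=
  psd_det_nonneg (Amat_posSemidef t β ε hβsymm hβdiag hβ0 hε0)

lemma det_Amat_mono (t : V → ℝ) (β β' : V → V → ℝ) (ε ε' : V → ℝ)
    (hβsymm : ∀ i j, β i j = β j i) (hβ'symm : ∀ i j, β' i j = β' j i)
    (hβdiag : ∀ i, β i i = 0) (hβ'diag : ∀ i, β' i i = 0)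
    (hβ0 : ∀ i j, 0 ≤ β i j) (hε0 : ∀ i, 0 ≤ ε i)
    (hββ' : ∀ i j, β i j ≤ β' i j) (hεε' : ∀ i, ε i ≤ ε' i) :
    (Amat β ε t).det ≤ (Amat β' ε' t).det := by
  have hA : (Amat β ε t).PosSemidef := Amat_posSemidef t β ε hβsymm hβdiag hβ0 hε0
  have hC : (Amat (fun i j => β' i j - β i j) (fun i => ε' i - ε i) t).PosSemidef :=
    Amat_posSemidef t _ _ (fun i j => by rw [hβsymm i j, hβ'symm i j])
      (fun i => by rw [hβdiag i, hβ'diag i, sub_zero])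
      (fun i j => sub_nonneg.mpr (hββ' i j)) (fun i => sub_nonneg.mpr (hεε' i))
  have h1 : (fun i j => β i j + (β' i j - β i j)) = β' := by funext i j; ring
  have h2 : (fun i => ε i + (ε' i - ε i)) = ε' := by funext i; ring
  have hsplit : Amat β' ε' t
      = Amat β ε t + Amat (fun i j => β' i j - β i j) (fun i => ε' i - ε i) t := by
    rw [← Amat_add, h1, h2]
  rw [hsplit]
  exact det_le_det_add_psd hA hC

lemma Amat_update_affine (t : V → ℝ) (β : V → V → ℝ) (ε : V → ℝ) (i : V) (s : ℝ) :
    (Amat β (Function.update ε i s) t).det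
      = (Amat β (Function.update ε i 0) t).det
        + s * (Real.exp (t i)
            * ((Amat β (Function.update ε i 0) t).updateRow i (Pi.single i 1)).det) := by
  set A0 := Amat β (Function.update ε i 0) t with hA0
  have hmat : Amat β (Function.update ε i s) t
      = A0.updateRow i (A0 i + (s * Real.exp (t i)) • (Pi.single i 1 : V → ℝ)) := by
    ext a b
    by_cases ha : a = i
    · subst ha
      rw [updateRow_self]
      by_cases hb : a = b
      · subst hb
        simp only [Amat, hA0, of_apply, if_pos rfl, Pi.add_apply, Pi.smul_apply,
          Pi.single_eq_same, Function.update_self, smul_eq_mul, mul_one, if_true]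
        ring
      · simp only [Amat, hA0, of_apply, if_neg hb, Pi.add_apply, Pi.smul_apply,
          smul_eq_mul]
        rw [Pi.single_eq_of_ne (Ne.symm hb)]
        ring
    · rw [updateRow_ne ha]
      by_cases hb : a = b
      · subst hb
        simp only [Amat, hA0, of_apply, if_pos rfl]
        rw [Function.update_of_ne ha, Function.update_of_ne ha]
      · simp only [Amat, hA0, of_apply, if_neg hb]
  rw [hmat, det_updateRow_add, updateRow_eq_self, det_updateRow_smul]
  ring

lemma det_Amat_update_scale (t : V → ℝ) (β : V → V → ℝ) (ε : V → ℝ) (i : V) (m s : ℝ)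
    (hβsymm : ∀ i j, β i j = β j i) (hβdiag : ∀ i, β i i = 0)
    (hβ0 : ∀ i j, 0 ≤ β i j) (hε0 : ∀ i, 0 ≤ ε i)
    (hm : 1 ≤ m) :
    (Amat β (Function.update ε i (m * s)) t).det
      ≤ m * (Amat β (Function.update ε i s) t).det := by
  have hε00 : ∀ j, 0 ≤ Function.update ε i 0 j := by
    intro j
    by_cases h : j = i
    · subst h; rw [Function.update_self]
    · rw [Function.update_of_ne h]; exact hε0 j
  have h0 : 0 ≤ (Amat β (Function.update ε i 0) t).det :=
    det_Amat_nonneg t β _ hβsymm hβdiag hβ0 hε00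
  rw [Amat_update_affine t β ε i (m * s), Amat_update_affine t β ε i s]
  linarith [mul_nonneg (sub_nonneg.mpr hm) h0]

lemma det_Amat_scale_all (t : V → ℝ) (β : V → V → ℝ) (m η : V → ℝ)
    (hβsymm : ∀ i j, β i j = β j i) (hβdiag : ∀ i, β i i = 0)
    (hβ0 : ∀ i j, 0 ≤ β i j) (hη0 : ∀ i, 0 ≤ η i) (hm : ∀ i, 1 ≤ m i) :
    (Amat β (fun i => m i * η i) t).det ≤ (∏ i, m i) * (Amat β η t).det := by
  suffices h : ∀ S : Finset V,
      (Amat β (fun i => if i ∈ S then m i * η i else η i) t).det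
        ≤ (∏ i ∈ S, m i) * (Amat β η t).det by
    have := h Finset.univ
    simpa using this
  intro S
  induction S using Finset.induction_on with
  | empty => simp
  | @insert a S ha ih =>
    set εS : V → ℝ := fun i => if i ∈ S then m i * η i else η i with hεS
    have hεS0 : ∀ j, 0 ≤ εS j := by
      intro j
      by_cases h : j ∈ S
      · simp only [hεS, if_pos h]
        exact mul_nonneg (le_trans zero_le_one (hm j)) (hη0 j)
      · simp only [hεS, if_neg h]; exact hη0 j
    have key : (fun i => if i ∈ insert a S then m i * η i else η i)
        = Function.update εS a (m a * η a) := by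
      funext j
      by_cases h : j = a
      · subst h; rw [Function.update_self, if_pos (Finset.mem_insert_self _ _)]
      · rw [Function.update_of_ne h]
        simp only [hεS, Finset.mem_insert]
        by_cases h2 : j ∈ S
        · rw [if_pos h2, if_pos (Or.inr h2)]
        · rw [if_neg h2, if_neg (by tauto)]
    have hfix : Function.update εS a (η a) = εS := by
      have : εS a = η a := by simp only [hεS, if_neg ha]
      rw [← this, Function.update_eq_self]
    calc (Amat β (fun i => if i ∈ insert a S then m i * η i else η i) t).det
        = (Amat β (Function.update εS a (m a * η a)) t).det := by rw [key]
      _ ≤ m a * (Amat β (Function.update εS a (η a)) t).det :=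
          det_Amat_update_scale t β εS a (m a) (η a) hβsymm hβdiag hβ0 hεS0 (hm a)
      _ = m a * (Amat β εS t).det := by rw [hfix]
      _ ≤ m a * ((∏ i ∈ S, m i) * (Amat β η t).det) :=
          mul_le_mul_of_nonneg_left ih (le_trans zero_le_one (hm a))
      _ = (∏ i ∈ insert a S, m i) * (Amat β η t).det := by
          rw [Finset.prod_insert ha]; ring

/-- Theorem (monotonicity of the pinned determinant): if `β ≤ β'` and `ε ≤ ε'`
entrywise then `0 ≤ det A^{ε,β}(t) ≤ det A^{ε',β'}(t)`.  In particular, if `ε` is built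
from auxiliary nonnegative weights `θ` by `εᵢ = Σ_k θ_{ik} c_k` and `ε̃` is built in the
same way from the truncated weights `min(θ_{ik},1)`, then
`det A^{ε,β}(t) ≤ (∏_{i,k} max(θ_{ik},1)) det A^{ε̃,β}(t)`. -/
theorem pinned_det_monotone
    (t : V → ℝ) (β β' : V → V → ℝ) (ε ε' : V → ℝ)
    (hβsymm : ∀ i j, β i j = β j i) (hβ'symm : ∀ i j, β' i j = β' j i)
    (hβdiag : ∀ i, β i i = 0) (hβ'diag : ∀ i, β' i i = 0)
    (hβ0 : ∀ i j, 0 ≤ β i j) (hε0 : ∀ i, 0 ≤ ε i)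
    (hββ' : ∀ i j, β i j ≤ β' i j) (hεε' : ∀ i, ε i ≤ ε' i) :
    (0 ≤ (Amat β ε t).det ∧ (Amat β ε t).det ≤ (Amat β' ε' t).det) ∧
    (∀ (θ : V → V → ℝ) (c : V → ℝ), (∀ i k, 0 ≤ θ i k) → (∀ k, 0 ≤ c k) →
      (Amat β (fun i => ∑ k, θ i k * c k) t).det ≤
        (∏ i, ∏ k, max (θ i k) 1) *
          (Amat β (fun i => ∑ k, min (θ i k) 1 * c k) t).det) := by
  refine ⟨⟨det_Amat_nonneg t β ε hβsymm hβdiag hβ0 hε0,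
    det_Amat_mono t β β' ε ε' hβsymm hβ'symm hβdiag hβ'diag hβ0 hε0 hββ' hεε'⟩, ?_⟩
  intro θ c hθ hc
  set M : V → ℝ := fun i => ∏ k, max (θ i k) 1 with hM
  have hM1 : ∀ i, 1 ≤ M i := by
    intro i
    calc (1:ℝ) = ∏ _k : V, 1 := by simp
      _ ≤ ∏ k, max (θ i k) 1 :=
          Finset.prod_le_prod (fun _ _ => zero_le_one) (fun k _ => le_max_right _ _)
  have hmax_le : ∀ i k, max (θ i k) 1 ≤ M i := by
    intro i k
    rw [hM]
    simp only
    rw [← Finset.mul_prod_erase Finset.univ _ (Finset.mem_univ k)]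
    refine le_mul_of_one_le_right (le_trans zero_le_one (le_max_right _ _)) ?_
    calc (1:ℝ) = ∏ _k ∈ Finset.univ.erase k, 1 := by simp
      _ ≤ ∏ k' ∈ Finset.univ.erase k, max (θ i k') 1 :=
          Finset.prod_le_prod (fun _ _ => zero_le_one) (fun _ _ => le_max_right _ _)
  have hθle : ∀ i k, θ i k ≤ M i * min (θ i k) 1 := by
    intro i k
    calc θ i k = min (θ i k) 1 * max (θ i k) 1 := by rw [min_mul_max, mul_one]
      _ ≤ min (θ i k) 1 * M i :=
          mul_le_mul_of_nonneg_left (hmax_le i k) (le_min (hθ i k) zero_le_one)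
      _ = M i * min (θ i k) 1 := mul_comm _ _
  have hεle : ∀ i, (∑ k, θ i k * c k) ≤ M i * ∑ k, min (θ i k) 1 * c k := by
    intro i
    rw [Finset.mul_sum]
    refine Finset.sum_le_sum fun k _ => ?_
    calc θ i k * c k ≤ (M i * min (θ i k) 1) * c k :=
          mul_le_mul_of_nonneg_right (hθle i k) (hc k)
      _ = M i * (min (θ i k) 1 * c k) := by ring
  have step1 : (Amat β (fun i => ∑ k, θ i k * c k) t).det
      ≤ (Amat β (fun i => M i * ∑ k, min (θ i k) 1 * c k) t).det :=
    det_Amat_mono t β β _ _ hβsymm hβsymm hβdiag hβdiag hβ0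
      (fun i => Finset.sum_nonneg fun k _ => mul_nonneg (hθ i k) (hc k))
      (fun i j => le_refl _) hεle
  have step2 : (Amat β (fun i => M i * ∑ k, min (θ i k) 1 * c k) t).det
      ≤ (∏ i, M i) * (Amat β (fun i => ∑ k, min (θ i k) 1 * c k) t).det :=
    det_Amat_scale_all t β M _ hβsymm hβdiag hβ0
      (fun i => Finset.sum_nonneg fun k _ => mul_nonneg (le_min (hθ i k) zero_le_one) (hc k))
      hM1
  exact le_trans step1 step2
end
end

section
/- Deterministic time-change identity (Lemma 1 of the paper): let V be a finite set and Y:[0,∞)→V a right-continuous path with finitely many jumps on every compact interval. Set L_x(s) := 1 + ∫₀^s 1_{Y_u=x} du and A(s) := Σ_{x∈V} log L_x(s). Then A is a continuous, strictly increasing bijection from [0,∞) onto [0,∞); letting X_t := Y_{A^{-1}(t)} and T_i(t) := ∫₀^t 1_{X_u=i} du, one has T_x(A(s)) = log L_x(s) for all x∈V and s≥0, and A^{-1}(t) = ∫₀^t e^{T_{X_u}(u)} du = Σ_{i∈V} (e^{T_i(t)} − 1) for all t≥0. -/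
open MeasureTheory Real

noncomputable section

variable {V : Type*} [Fintype V] [DecidableEq V]

/-- `L_x(s) = 1 + ∫₀^s 1_{Y_u = x} du`. -/
def Locc (Y : ℝ → V) (x : V) (s : ℝ) : ℝ :=
  1 + ∫ u in Set.Ioc (0 : ℝ) s, (if Y u = x then (1 : ℝ) else 0)

/-- `A(s) = Σ_x log L_x(s)`. -/
def Afun (Y : ℝ → V) (s : ℝ) : ℝ :=
  ∑ x : V, Real.log (Locc Y x s)

/-- The occupation time `T_i(t) = ∫₀^t 1_{X_u = i} du` of the time-changed process
`X_t = Y_{B(t)}`. -/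
def occT (Y : ℝ → V) (B : ℝ → ℝ) (i : V) (t : ℝ) : ℝ :=
  ∫ u in Set.Ioc (0 : ℝ) t, (if Y (B u) = i then (1 : ℝ) else 0)

section TCAux

open Set Filter intervalIntegral Topology

set_option linter.unusedSectionVars false

/-- the indicator of `{Y = x}` as a real valued function. -/
def TCind (Y : ℝ → V) (x : V) (u : ℝ) : ℝ := if Y u = x then 1 else 0

/-- primitive of the indicator. -/
def TCF (Y : ℝ → V) (x : V) (s : ℝ) : ℝ := ∫ u in (0:ℝ)..s, TCind Y x u

/-- interval-integral version of `Afun`. -/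
def TCA (Y : ℝ → V) (s : ℝ) : ℝ := ∑ x : V, Real.log (1 + TCF Y x s)

variable (Y : ℝ → V)

lemma TCF_zero (x : V) : TCF Y x 0 = 0 := by simp [TCF]

lemma sum_TCind (u : ℝ) : ∑ x : V, TCind Y x u = 1 := by
  simp [TCind, Finset.sum_ite_eq]

lemma TCind_nonneg (x : V) (u : ℝ) : 0 ≤ TCind Y x u := by
  by_cases h : Y u = x <;> simp [TCind, h]

lemma TCA_zero : TCA Y 0 = 0 := by simp [TCA, TCF_zero]

/-- measurable function bounded by `exp ∘ abs` is interval integrable. -/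
lemma TC_intInt {f : ℝ → ℝ} (hm : Measurable f)
    (hb : ∀ u : ℝ, |f u| ≤ Real.exp |u|) :
    ∀ a b : ℝ, IntervalIntegrable f volume a b := by
  intro a b
  rw [intervalIntegrable_iff]
  refine Integrable.mono' (g := fun _ => Real.exp (max |a| |b|))
    (integrableOn_const measure_Ioc_lt_top.ne)
    hm.aestronglyMeasurable ?_
  refine (ae_restrict_iff' measurableSet_uIoc).2 (Filter.Eventually.of_forall ?_)
  intro u hu
  have h1 : u ≤ max |a| |b| := le_trans hu.2 (max_le_max (le_abs_self a) (le_abs_self b))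
  have h2 : -(max |a| |b|) ≤ u := by
    refine le_trans (le_min ?_ ?_) (le_of_lt hu.1)
    · exact le_trans (neg_le_neg (le_max_left |a| |b|)) (neg_abs_le a)
    · exact le_trans (neg_le_neg (le_max_right |a| |b|)) (neg_abs_le b)
  have h3 : |u| ≤ max |a| |b| := abs_le.2 ⟨h2, h1⟩
  calc ‖f u‖ = |f u| := Real.norm_eq_abs (f u)
    _ ≤ Real.exp |u| := hb u
    _ ≤ Real.exp (max |a| |b|) := Real.exp_le_exp.2 h3

/-- FTC for the primitive of a function that is locally constant to the right. -/
lemma TC_hasDerivWithinAt_primitive {f : ℝ → ℝ} (hm : Measurable f)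
    (hint : ∀ a b : ℝ, IntervalIntegrable f volume a b) {t δ : ℝ} (hδ : 0 < δ)
    {g : ℝ → ℝ} (hg : Continuous g)
    (hconst : ∀ u ∈ Set.Ico t (t + δ), f u = g u) :
    HasDerivWithinAt (fun u => ∫ x in (0:ℝ)..u, f x) (f t) (Set.Ici t) t := by
  refine intervalIntegral.integral_hasDerivWithinAt_right (hint 0 t)
    (hm.stronglyMeasurable.stronglyMeasurableAtFilter) ?_
  have hev : f =ᶠ[𝓝[>] t] g := by
    filter_upwards [Ioo_mem_nhdsGT_of_mem
      (Set.mem_Ico.2 ⟨le_refl t, lt_add_of_pos_right t hδ⟩)] with u hu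
    exact hconst u ⟨le_of_lt hu.1, hu.2⟩
  have hft : f t = g t := hconst t ⟨le_refl t, lt_add_of_pos_right t hδ⟩
  have : Filter.Tendsto g (𝓝[>] t) (𝓝 (g t)) :=
    (hg.tendsto t).mono_left nhdsWithin_le_nhds
  rw [ContinuousWithinAt]  -- unfold?
  rw [hft]
  exact this.congr' hev.symm


variable
  (hjumps : ∀ a b : ℝ,
    {t ∈ Set.Icc a b | ¬ ∃ ε > 0, ∀ s ∈ Set.Ioo (t - ε) (t + ε), Y s = Y t}.Finite)
  (hrc : ∀ t : ℝ, ∃ ε > 0, ∀ s ∈ Set.Ico t (t + ε), Y s = Y t)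

include hjumps

lemma TC_measurableSet_level (x : V) : MeasurableSet {u : ℝ | Y u = x} := by
  set J : Set ℝ := ⋃ n : ℕ,
    {t ∈ Set.Icc (-(n:ℝ)) (n:ℝ) | ¬ ∃ ε > 0, ∀ s ∈ Set.Ioo (t - ε) (t + ε), Y s = Y t} with hJ
  have hJc : J.Countable := Set.countable_iUnion fun n => (hjumps _ _).countable
  have key : {u : ℝ | Y u = x} = interior {u : ℝ | Y u = x} ∪ ({u : ℝ | Y u = x} ∩ J) := by
    apply Subset.antisymm
    · intro u hu
      by_cases hJu : u ∈ J
      · exact Or.inr ⟨hu, hJu⟩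
      · left
        have hmem : u ∈ Set.Icc (-((⌈|u|⌉₊ : ℕ) : ℝ)) ((⌈|u|⌉₊ : ℕ) : ℝ) := by
          have h1 := Nat.le_ceil |u|
          have h2 := neg_abs_le u
          have h3 := le_abs_self u
          constructor <;> linarith
        have hloc : ∃ ε > 0, ∀ s ∈ Set.Ioo (u - ε) (u + ε), Y s = Y u := by
          by_contra hcon
          exact hJu (Set.mem_iUnion.2 ⟨⌈|u|⌉₊, ⟨hmem, hcon⟩⟩)
        obtain ⟨ε, hε, hconst⟩ := hloc
        refine mem_interior.2 ⟨Set.Ioo (u - ε) (u + ε), ?_, isOpen_Ioo, ?_⟩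
        · intro s hs
          exact (hconst s hs).trans hu
        · exact ⟨by linarith, by linarith⟩
    · rintro u (h | ⟨h, _⟩)
      exacts [interior_subset h, h]
  rw [key]
  exact isOpen_interior.measurableSet.union
    ((hJc.mono inter_subset_right).measurableSet)

lemma TC_measurable_ind (x : V) : Measurable (TCind Y x) := by
  have : TCind Y x = Set.indicator {u : ℝ | Y u = x} (fun _ => (1:ℝ)) := by
    ext u; by_cases h : Y u = x <;> simp [TCind, h, Set.indicator]
  rw [this]
  exact (measurable_const).indicator (TC_measurableSet_level Y hjumps x)

lemma TC_intInt_ind (x : V) : ∀ a b : ℝ, IntervalIntegrable (TCind Y x) volume a b := by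
  refine TC_intInt (TC_measurable_ind Y hjumps x) ?_
  intro u
  have h1 : (1:ℝ) ≤ Real.exp |u| := by
    rw [← Real.exp_zero]
    exact Real.exp_le_exp.2 (abs_nonneg u)
  by_cases h : Y u = x <;> simp [TCind, h] <;> linarith

lemma TC_cont_F (x : V) : Continuous (TCF Y x) :=
  intervalIntegral.continuous_primitive (TC_intInt_ind Y hjumps x) 0

lemma TCF_mono (x : V) {s s' : ℝ} (h : s ≤ s') : TCF Y x s ≤ TCF Y x s' := by
  have hadd := intervalIntegral.integral_add_adjacent_intervals
    (TC_intInt_ind Y hjumps x 0 s) (TC_intInt_ind Y hjumps x s s')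
  have hnn : 0 ≤ ∫ u in s..s', TCind Y x u :=
    intervalIntegral.integral_nonneg h (fun u _ => TCind_nonneg Y x u)
  have : TCF Y x s' = TCF Y x s + ∫ u in s..s', TCind Y x u := by
    rw [TCF, TCF, hadd]
  linarith

lemma TCF_nonneg (x : V) {s : ℝ} (h : 0 ≤ s) : 0 ≤ TCF Y x s := by
  have := TCF_mono Y hjumps x h
  rwa [TCF_zero Y x] at this

lemma TC_onePlusF_pos (x : V) {s : ℝ} (h : 0 ≤ s) : 0 < 1 + TCF Y x s := by
  have := TCF_nonneg Y hjumps x h; linarith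

lemma TC_sum_F (s : ℝ) : ∑ x : V, TCF Y x s = s := by
  calc ∑ x : V, TCF Y x s = ∫ u in (0:ℝ)..s, ∑ x : V, TCind Y x u :=
        (intervalIntegral.integral_finset_sum
          (fun x _ => TC_intInt_ind Y hjumps x 0 s)).symm
    _ = ∫ _u in (0:ℝ)..s, (1:ℝ) := by simp only [sum_TCind Y]
    _ = s := by simp

lemma TC_cont_A : ContinuousOn (TCA Y) (Set.Ici 0) := by
  refine continuousOn_finset_sum _ (fun x _ => ?_)
  refine ContinuousOn.log ((continuous_const.add (TC_cont_F Y hjumps x)).continuousOn) ?_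
  intro s hs
  exact ne_of_gt (TC_onePlusF_pos Y hjumps x hs)

lemma TCA_nonneg {s : ℝ} (h : 0 ≤ s) : 0 ≤ TCA Y s := by
  refine Finset.sum_nonneg (fun x _ => Real.log_nonneg ?_)
  have := TCF_nonneg Y hjumps x h; linarith

lemma TC_strictMono_A : StrictMonoOn (TCA Y) (Set.Ici 0) := by
  intro s hs s' hs' hlt
  have hsum : ∑ x : V, (TCF Y x s' - TCF Y x s) = s' - s := by
    rw [Finset.sum_sub_distrib, TC_sum_F Y hjumps, TC_sum_F Y hjumps]
  have hex : ∃ x : V, TCF Y x s < TCF Y x s' := by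
    by_contra hcon
    push_neg at hcon
    have : ∑ x : V, (TCF Y x s' - TCF Y x s) ≤ 0 :=
      Finset.sum_nonpos (fun x _ => by linarith [hcon x])
    linarith
  obtain ⟨x0, hx0⟩ := hex
  refine Finset.sum_lt_sum (fun x _ => ?_) ⟨x0, Finset.mem_univ x0, ?_⟩
  · exact Real.log_le_log (TC_onePlusF_pos Y hjumps x hs)
      (by linarith [TCF_mono Y hjumps x (le_of_lt hlt)])
  · exact Real.log_lt_log (TC_onePlusF_pos Y hjumps x0 hs) (by linarith)

lemma TCA_image : TCA Y '' Set.Ici 0 = Set.Ici 0 := by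
  have hne : Nonempty V := ⟨Y 0⟩
  apply Subset.antisymm
  · rintro y ⟨s, hs, rfl⟩
    exact TCA_nonneg Y hjumps hs
  · intro y hy
    have hy' : (0:ℝ) ≤ y := hy
    set n : ℝ := (Fintype.card V : ℝ) with hn
    have hnpos : 0 < n := by
      rw [hn]
      exact_mod_cast Fintype.card_pos_iff.2 hne
    set s₀ : ℝ := n * (Real.exp y - 1) with hs₀
    have hs₀nn : 0 ≤ s₀ := by
      have : 1 ≤ Real.exp y := Real.one_le_exp hy'
      have h2 : (0:ℝ) ≤ Real.exp y - 1 := by linarith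
      positivity
    have hbig : y ≤ TCA Y s₀ := by
      have hsum : ∑ x : V, TCF Y x s₀ = s₀ := TC_sum_F Y hjumps s₀
      have hex : ∃ x : V, s₀ / n ≤ TCF Y x s₀ := by
        by_contra hcon
        push_neg at hcon
        have hlt : ∑ x : V, TCF Y x s₀ < ∑ _x : V, s₀ / n :=
          Finset.sum_lt_sum_of_nonempty (Finset.univ_nonempty) (fun x _ => hcon x)
        rw [hsum, Finset.sum_const, Finset.card_univ, nsmul_eq_mul] at hlt
        rw [mul_div_cancel₀ _ (ne_of_gt hnpos)] at hlt
        exact lt_irrefl _ hlt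
      obtain ⟨x, hx⟩ := hex
      have hterm : y ≤ Real.log (1 + TCF Y x s₀) := by
        have h1 : s₀ / n = Real.exp y - 1 := by
          rw [hs₀, mul_comm, mul_div_assoc, div_self (ne_of_gt hnpos), mul_one]
        have h2 : Real.exp y ≤ 1 + TCF Y x s₀ := by
          rw [h1] at hx; linarith
        calc y = Real.log (Real.exp y) := (Real.log_exp y).symm
          _ ≤ Real.log (1 + TCF Y x s₀) :=
            Real.log_le_log (Real.exp_pos y) h2
      calc y ≤ Real.log (1 + TCF Y x s₀) := hterm
        _ ≤ ∑ i : V, Real.log (1 + TCF Y i s₀) :=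
            Finset.single_le_sum (f := fun i => Real.log (1 + TCF Y i s₀))
              (fun i _ => Real.log_nonneg (by linarith [TCF_nonneg Y hjumps i hs₀nn]))
              (Finset.mem_univ x)
        _ = TCA Y s₀ := rfl
    have hy2 : y ∈ Set.Icc (TCA Y 0) (TCA Y s₀) := by
      rw [TCA_zero]
      exact ⟨hy', hbig⟩
    obtain ⟨s, hsmem, hseq⟩ :=
      intermediate_value_Icc hs₀nn ((TC_cont_A Y hjumps).mono Set.Icc_subset_Ici_self) hy2
    exact ⟨s, hsmem.1, hseq⟩

include hrc

lemma TC_hasDerivWithinAt_F (x : V) (s : ℝ) :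
    HasDerivWithinAt (TCF Y x) (TCind Y x s) (Set.Ici s) s := by
  obtain ⟨ε, hε, hconst⟩ := hrc s
  exact TC_hasDerivWithinAt_primitive (TC_measurable_ind Y hjumps x)
    (TC_intInt_ind Y hjumps x) hε (g := fun _ => TCind Y x s) continuous_const
    (fun u hu => by simp only [TCind, hconst u hu])

lemma TC_logF_deriv (x : V) {s : ℝ} (hs : 0 ≤ s) :
    HasDerivWithinAt (fun σ => Real.log (1 + TCF Y x σ))
      ((1 + TCF Y x s)⁻¹ * TCind Y x s) (Set.Ici s) s := by
  have h1 : HasDerivWithinAt (fun σ => 1 + TCF Y x σ) (TCind Y x s) (Set.Ici s) s :=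
    (TC_hasDerivWithinAt_F Y hjumps hrc x s).const_add 1
  have h2 : HasDerivAt Real.log (1 + TCF Y x s)⁻¹ (1 + TCF Y x s) :=
    Real.hasDerivAt_log (ne_of_gt (TC_onePlusF_pos Y hjumps x hs))
  exact h2.comp_hasDerivWithinAt s h1

lemma TCA_deriv {s : ℝ} (hs : 0 ≤ s) :
    HasDerivWithinAt (TCA Y) ((1 + TCF Y (Y s) s)⁻¹) (Set.Ici s) s := by
  have hsum := HasDerivWithinAt.fun_sum (u := Finset.univ)
    (A := fun x σ => Real.log (1 + TCF Y x σ))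
    (A' := fun x => (1 + TCF Y x s)⁻¹ * TCind Y x s)
    (fun x _ => TC_logF_deriv Y hjumps hrc x hs)
  have hval : ∑ x : V, (1 + TCF Y x s)⁻¹ * TCind Y x s = (1 + TCF Y (Y s) s)⁻¹ := by
    simp [TCind, mul_ite, Finset.sum_ite_eq]
  rw [hval] at hsum
  exact hsum

end TCAux

/-- Theorem (deterministic time-change identity, Lemma 1 of Sabot–Tarrès): for a
right-continuous path `Y` with finitely many jumps on compact intervals, `A` is a
continuous strictly increasing bijection from `[0,∞)` onto `[0,∞)` and, for any inverse
`B` of `A` on `[0,∞)`, one has `T_x(A(s)) = log L_x(s)` and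
`A⁻¹(t) = ∫₀^t e^{T_{X_u}(u)} du = Σ_i (e^{T_i(t)} - 1)`. -/
theorem time_change_identity (Y : ℝ → V)
    (hrc : ∀ t : ℝ, ∃ ε > 0, ∀ s ∈ Set.Ico t (t + ε), Y s = Y t)
    (hjumps : ∀ a b : ℝ,
      {t ∈ Set.Icc a b | ¬ ∃ ε > 0, ∀ s ∈ Set.Ioo (t - ε) (t + ε), Y s = Y t}.Finite) :
    ContinuousOn (Afun Y) (Set.Ici 0) ∧
    StrictMonoOn (Afun Y) (Set.Ici 0) ∧
    Afun Y '' Set.Ici 0 = Set.Ici 0 ∧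
    ∀ B : ℝ → ℝ,
      (∀ s ∈ Set.Ici (0 : ℝ), B (Afun Y s) = s) →
      (∀ t ∈ Set.Ici (0 : ℝ), Afun Y (B t) = t) →
      ((∀ x : V, ∀ s ∈ Set.Ici (0 : ℝ), occT Y B x (Afun Y s) = Real.log (Locc Y x s)) ∧
       (∀ t ∈ Set.Ici (0 : ℝ),
          B t = ∫ u in Set.Ioc (0 : ℝ) t, Real.exp (occT Y B (Y (B u)) u)) ∧
       (∀ t ∈ Set.Ici (0 : ℝ), B t = ∑ i : V, (Real.exp (occT Y B i t) - 1))) := by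
  have hLocc : ∀ (x : V) (s : ℝ), 0 ≤ s → Locc Y x s = 1 + TCF Y x s := by
    intro x s hs
    simp only [Locc, TCF, TCind, intervalIntegral.integral_of_le hs]
  have hAeq : ∀ s : ℝ, 0 ≤ s → Afun Y s = TCA Y s := by
    intro s hs
    rw [Afun, TCA]
    exact Finset.sum_congr rfl (fun x _ => by rw [hLocc x s hs])
  have hAcont : ContinuousOn (Afun Y) (Set.Ici 0) :=
    (TC_cont_A Y hjumps).congr (fun s hs => hAeq s hs)
  have hAmono : StrictMonoOn (Afun Y) (Set.Ici 0) := by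
    intro s hs s' hs' h
    rw [hAeq s hs, hAeq s' hs']
    exact TC_strictMono_A Y hjumps hs hs' h
  have hAimage : Afun Y '' Set.Ici 0 = Set.Ici 0 := by
    have himg : Afun Y '' Set.Ici 0 = TCA Y '' Set.Ici 0 :=
      Set.image_congr (fun s hs => hAeq s hs)
    rw [himg]
    exact TCA_image Y hjumps
  refine ⟨hAcont, hAmono, hAimage, ?_⟩
  intro B hinv1 hinv2
  -- basic facts about the inverse B
  have hBnn : ∀ t : ℝ, 0 ≤ t → 0 ≤ B t := by
    intro t ht
    have : t ∈ Afun Y '' Set.Ici 0 := hAimage.symm ▸ Set.mem_Ici.2 ht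
    obtain ⟨s, hs, hst⟩ := this
    rw [← hst, hinv1 s hs]
    exact hs
  have hAnn : ∀ s : ℝ, 0 ≤ s → 0 ≤ TCA Y s := fun s hs => TCA_nonneg Y hjumps hs
  have hBA : ∀ s : ℝ, 0 ≤ s → B (TCA Y s) = s := fun s hs => by
    rw [← hAeq s hs]; exact hinv1 s (Set.mem_Ici.2 hs)
  have hABt : ∀ t : ℝ, 0 ≤ t → TCA Y (B t) = t := fun t ht => by
    rw [← hAeq _ (hBnn t ht)]; exact hinv2 t (Set.mem_Ici.2 ht)
  have hBmono : ∀ t t' : ℝ, 0 ≤ t → t ≤ t' → B t ≤ B t' := by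
    intro t t' ht htt'
    by_contra hcon
    push_neg at hcon
    have := TC_strictMono_A Y hjumps (Set.mem_Ici.2 (hBnn t' (le_trans ht htt')))
      (Set.mem_Ici.2 (hBnn t ht)) hcon
    rw [hABt t ht, hABt t' (le_trans ht htt')] at this
    linarith
  have hBlt : ∀ t u : ℝ, 0 ≤ t → 0 ≤ u → t < TCA Y u → B t < u := by
    intro t u ht hu hlt
    by_contra hcon
    push_neg at hcon
    have hmono := (TC_strictMono_A Y hjumps).monotoneOn (Set.mem_Ici.2 hu)
      (Set.mem_Ici.2 (hBnn t ht)) hcon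
    rw [hABt t ht] at hmono
    linarith
  -- globally monotone modification of B
  set B' : ℝ → ℝ := fun u => B (max u 0) with hB'def
  have hB'eq : ∀ u : ℝ, 0 ≤ u → B' u = B u := by
    intro u hu; rw [hB'def]; simp [max_eq_left hu]
  have hB'mono : Monotone B' := fun u v huv =>
    hBmono _ _ (le_max_right u 0) (max_le_max huv (le_refl 0))
  have hB'meas : Measurable B' := hB'mono.measurable
  -- Y ∘ B is locally constant on the right
  have hYB : ∀ t : ℝ, 0 ≤ t → ∃ δ > 0, ∀ u ∈ Set.Ico t (t + δ), Y (B' u) = Y (B' t) := by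
    intro t ht
    obtain ⟨ε, hε, hconst⟩ := hrc (B t)
    refine ⟨TCA Y (B t + ε) - t, ?_, ?_⟩
    · have h1 : TCA Y (B t) < TCA Y (B t + ε) :=
        TC_strictMono_A Y hjumps (Set.mem_Ici.2 (hBnn t ht))
          (Set.mem_Ici.2 (by linarith [hBnn t ht])) (by linarith)
      rw [hABt t ht] at h1
      linarith
    · intro u hu
      have hu0 : 0 ≤ u := le_trans ht hu.1
      have h1 : B t ≤ B u := hBmono t u ht hu.1
      have h2 : B u < B t + ε :=
        hBlt u (B t + ε) hu0 (by linarith [hBnn t ht]) (by linarith [hu.2])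
      rw [hB'eq u hu0, hB'eq t ht]
      exact hconst (B u) ⟨h1, h2⟩
  -- occupation indicator of the time-changed path, and its primitive
  set g : V → ℝ → ℝ := fun i u => if Y (B' u) = i then 1 else 0 with hgdef
  have hgmeas : ∀ i : V, Measurable (g i) := by
    intro i
    have : g i = (TCind Y i) ∘ B' := by
      funext u; simp [hgdef, TCind]
    rw [this]
    exact (TC_measurable_ind Y hjumps i).comp hB'meas
  have hgle1 : ∀ (i : V) (u : ℝ), |g i u| ≤ 1 := by
    intro i u
    by_cases h : Y (B' u) = i <;> simp [hgdef, h]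
  have hgbd : ∀ (i : V) (u : ℝ), |g i u| ≤ Real.exp |u| := by
    intro i u
    have h1 : (1:ℝ) ≤ Real.exp |u| := by
      rw [← Real.exp_zero]; exact Real.exp_le_exp.2 (abs_nonneg u)
    exact le_trans (hgle1 i u) h1
  have hgint : ∀ i : V, ∀ a b : ℝ, IntervalIntegrable (g i) volume a b :=
    fun i => TC_intInt (hgmeas i) (hgbd i)
  set G : V → ℝ → ℝ := fun i t => ∫ u in (0:ℝ)..t, g i u with hGdef
  have hGcont : ∀ i : V, Continuous (G i) :=
    fun i => intervalIntegral.continuous_primitive (hgint i) 0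
  have hGzero : ∀ i : V, G i 0 = 0 := by intro i; simp [hGdef]
  have hGderiv : ∀ (i : V) (t : ℝ), 0 ≤ t → HasDerivWithinAt (G i) (g i t) (Set.Ici t) t := by
    intro i t ht
    obtain ⟨δ, hδ, hconst⟩ := hYB t ht
    exact TC_hasDerivWithinAt_primitive (hgmeas i) (hgint i) hδ
      (g := fun _ => g i t) continuous_const
      (fun u hu => by simp only [hgdef, hconst u hu])
  have hGocc : ∀ (i : V) (t : ℝ), 0 ≤ t → occT Y B i t = G i t := by
    intro i t ht
    simp only [occT, hGdef]
    rw [intervalIntegral.integral_of_le ht]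
    refine MeasureTheory.setIntegral_congr_fun measurableSet_Ioc (fun u hu => ?_)
    simp only [hgdef]
    rw [hB'eq u (le_of_lt hu.1)]
  -- monotonicity of TCA as a MapsTo statement
  have hmapsA : ∀ σ : ℝ, 0 ≤ σ → Set.MapsTo (TCA Y) (Set.Ici σ) (Set.Ici (TCA Y σ)) := by
    intro σ hσ u hu
    exact (TC_strictMono_A Y hjumps).monotoneOn (Set.mem_Ici.2 hσ)
      (Set.mem_Ici.2 (le_trans hσ hu)) hu
  -- the key identity : G x ∘ TCA = log (1 + TCF x)
  have keyG : ∀ (x : V) (s : ℝ), 0 ≤ s → G x (TCA Y s) = Real.log (1 + TCF Y x s) := by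
    intro x s hs
    have hder1 : ∀ σ ∈ Set.Ico (0:ℝ) s, HasDerivWithinAt (fun σ => G x (TCA Y σ))
        ((1 + TCF Y x σ)⁻¹ * TCind Y x σ) (Set.Ici σ) σ := by
      intro σ hσ
      have hσ0 : 0 ≤ σ := hσ.1
      have hAσ : 0 ≤ TCA Y σ := hAnn σ hσ0
      have hcomp := HasDerivWithinAt.scomp (x := σ) (hGderiv x (TCA Y σ) hAσ)
        (TCA_deriv Y hjumps hrc hσ0) (hmapsA σ hσ0)
      have hgval : g x (TCA Y σ) = TCind Y x σ := by
        simp only [hgdef, TCind]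
        rw [hB'eq _ hAσ, hBA σ hσ0]
      have hval : (1 + TCF Y (Y σ) σ)⁻¹ • g x (TCA Y σ)
          = (1 + TCF Y x σ)⁻¹ * TCind Y x σ := by
        rw [hgval, smul_eq_mul]
        by_cases h : Y σ = x
        · rw [h]
        · simp [TCind, h]
      rw [hval] at hcomp
      exact hcomp
    have hder2 : ∀ σ ∈ Set.Ico (0:ℝ) s, HasDerivWithinAt (fun σ => Real.log (1 + TCF Y x σ))
        ((1 + TCF Y x σ)⁻¹ * TCind Y x σ) (Set.Ici σ) σ :=
      fun σ hσ => TC_logF_deriv Y hjumps hrc x hσ.1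
    have hc1 : ContinuousOn (fun σ => G x (TCA Y σ)) (Set.Icc (0:ℝ) s) :=
      (hGcont x).comp_continuousOn ((TC_cont_A Y hjumps).mono Set.Icc_subset_Ici_self)
    have hc2 : ContinuousOn (fun σ => Real.log (1 + TCF Y x σ)) (Set.Icc (0:ℝ) s) :=
      ContinuousOn.log ((continuous_const.add (TC_cont_F Y hjumps x)).continuousOn)
        (fun σ hσ => ne_of_gt (TC_onePlusF_pos Y hjumps x hσ.1))
    have h0 : G x (TCA Y 0) = Real.log (1 + TCF Y x 0) := by
      rw [TCA_zero Y, hGzero x, TCF_zero Y x]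
      simp
    exact eq_of_has_deriv_right_eq hder1 hder2 hc1 hc2 h0 s ⟨hs, le_refl s⟩
  -- part (i)
  have part1 : ∀ x : V, ∀ s ∈ Set.Ici (0:ℝ), occT Y B x (Afun Y s) = Real.log (Locc Y x s) := by
    intro x s hs
    have hs' : (0:ℝ) ≤ s := hs
    rw [hAeq s hs', hGocc x (TCA Y s) (hAnn s hs'), keyG x s hs', hLocc x s hs']
  -- part (iii)
  have part3 : ∀ t ∈ Set.Ici (0:ℝ), B t = ∑ i : V, (Real.exp (occT Y B i t) - 1) := by
    intro t ht
    have ht' : (0:ℝ) ≤ t := ht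
    have hs : 0 ≤ B t := hBnn t ht'
    have hterm : ∀ i : V, Real.exp (occT Y B i t) - 1 = TCF Y i (B t) := by
      intro i
      have h2 : G i t = Real.log (1 + TCF Y i (B t)) := by
        conv_lhs => rw [← hABt t ht']
        exact keyG i (B t) hs
      rw [hGocc i t ht', h2, Real.exp_log (TC_onePlusF_pos Y hjumps i hs)]
      ring
    rw [Finset.sum_congr rfl (fun i _ => hterm i), TC_sum_F Y hjumps (B t)]
  -- part (ii)
  have part2 : ∀ t ∈ Set.Ici (0:ℝ),
      B t = ∫ u in Set.Ioc (0:ℝ) t, Real.exp (occT Y B (Y (B u)) u) := by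
    set e : ℝ → ℝ := fun u => ∑ i : V, (if Y (B' u) = i then Real.exp (G i u) else 0)
      with hedef
    have heval : ∀ u : ℝ, e u = Real.exp (G (Y (B' u)) u) := by
      intro u; simp [hedef, Finset.sum_ite_eq]
    have hemeas : Measurable e := by
      refine Finset.measurable_sum _ (fun i _ => ?_)
      refine Measurable.ite ?_ ((Real.continuous_exp.comp (hGcont i)).measurable)
        measurable_const
      exact hB'meas (TC_measurableSet_level Y hjumps i)
    have hebd : ∀ u : ℝ, |e u| ≤ Real.exp |u| := by
      intro u
      rw [heval u, abs_of_pos (Real.exp_pos _)]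
      refine Real.exp_le_exp.2 ?_
      have h1 : ‖∫ v in (0:ℝ)..u, g (Y (B' u)) v‖ ≤ 1 * |u - 0| :=
        intervalIntegral.norm_integral_le_of_norm_le_const
          (fun v _ => by rw [Real.norm_eq_abs]; exact hgle1 (Y (B' u)) v)
      rw [Real.norm_eq_abs, one_mul, sub_zero] at h1
      have h2 : G (Y (B' u)) u = ∫ v in (0:ℝ)..u, g (Y (B' u)) v := by
        simp only [hGdef]
      rw [h2]
      exact le_trans (le_abs_self _) h1
    have heint : ∀ a b : ℝ, IntervalIntegrable e volume a b := TC_intInt hemeas hebd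
    set ψ : ℝ → ℝ := fun t => ∫ u in (0:ℝ)..t, e u with hψdef
    have hψderiv : ∀ t : ℝ, 0 ≤ t → HasDerivWithinAt ψ (e t) (Set.Ici t) t := by
      intro t ht
      obtain ⟨δ, hδ, hconst⟩ := hYB t ht
      refine TC_hasDerivWithinAt_primitive hemeas heint hδ
        (g := fun u => ∑ i : V, (if Y (B' t) = i then Real.exp (G i u) else 0)) ?_ ?_
      · refine continuous_finset_sum _ (fun i _ => ?_)
        by_cases h : Y (B' t) = i
        · simpa [h, Function.comp_def] using (Real.continuous_exp.comp (hGcont i))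
        · simpa [h] using continuous_const
      · intro u hu
        simp only [hedef, hconst u hu]
    have hψcont : Continuous ψ := intervalIntegral.continuous_primitive heint 0
    have hkey2 : ∀ s : ℝ, 0 ≤ s → ψ (TCA Y s) = s := by
      intro s hs
      have hder1 : ∀ σ ∈ Set.Ico (0:ℝ) s, HasDerivWithinAt (fun σ => ψ (TCA Y σ))
          ((1:ℝ)) (Set.Ici σ) σ := by
        intro σ hσ
        have hσ0 : 0 ≤ σ := hσ.1
        have hAσ : 0 ≤ TCA Y σ := hAnn σ hσ0
        have hcomp := HasDerivWithinAt.scomp (x := σ) (hψderiv (TCA Y σ) hAσ)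
          (TCA_deriv Y hjumps hrc hσ0) (hmapsA σ hσ0)
        have hval : (1 + TCF Y (Y σ) σ)⁻¹ • e (TCA Y σ) = 1 := by
          rw [heval, hB'eq _ hAσ, hBA σ hσ0, keyG (Y σ) σ hσ0,
            Real.exp_log (TC_onePlusF_pos Y hjumps (Y σ) hσ0), smul_eq_mul]
          exact inv_mul_cancel₀ (ne_of_gt (TC_onePlusF_pos Y hjumps (Y σ) hσ0))
        rw [hval] at hcomp
        exact hcomp
      have hder2 : ∀ σ ∈ Set.Ico (0:ℝ) s,
          HasDerivWithinAt (fun σ : ℝ => σ) ((1:ℝ)) (Set.Ici σ) σ :=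
        fun σ _ => hasDerivWithinAt_id σ _
      have hc1 : ContinuousOn (fun σ => ψ (TCA Y σ)) (Set.Icc (0:ℝ) s) :=
        hψcont.comp_continuousOn ((TC_cont_A Y hjumps).mono Set.Icc_subset_Ici_self)
      have hc2 : ContinuousOn (fun σ : ℝ => σ) (Set.Icc (0:ℝ) s) := continuousOn_id
      have h0 : ψ (TCA Y 0) = (0:ℝ) := by
        rw [TCA_zero Y]
        simp [hψdef]
      exact eq_of_has_deriv_right_eq hder1 hder2 hc1 hc2 h0 s ⟨hs, le_refl s⟩
    intro t ht
    have ht' : (0:ℝ) ≤ t := ht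
    have h1 : ψ t = B t := by
      conv_lhs => rw [← hABt t ht']
      exact hkey2 (B t) (hBnn t ht')
    rw [← h1]
    simp only [hψdef]
    rw [intervalIntegral.integral_of_le ht']
    refine MeasureTheory.setIntegral_congr_fun measurableSet_Ioc (fun u hu => ?_)
    have hu0 : (0:ℝ) ≤ u := le_of_lt hu.1
    rw [heval u, hB'eq u hu0, hGocc (Y (B u)) u hu0]
  exact ⟨part1, part2, part3⟩
end
end
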